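/- arXiv:1903.01271 — 7 statements merged into one kernel-verified Lean document; each statement's English description precedes it below -/
import Mathlib

section
/- Let H and A be Hermitian n×n complex matrices, and let Γ = exp(−H)/Tr[exp(−H)] be the associated Gibbs state. Then the function ε ↦ Tr[A exp(−H+εA)] / Tr[exp(−H+εA)] is differentiable at ε = 0 and its derivative there equals ∫₀¹ Var^{(s)}_Γ(A) ds, where Var^{(s)}_Γ(A) := Tr[A Γ^s A Γ^{1−s}] − (Tr[AΓ])². -/
open Matrix MeasureTheory

/-- Functional calculus for Hermitian matrices: apply `f` to the eigenvalues. -/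
noncomputable def matFun {n : ℕ} (f : ℝ → ℝ) (M : Matrix (Fin n) (Fin n) ℂ) :
    Matrix (Fin n) (Fin n) ℂ :=
  if h : M.IsHermitian then
    (h.eigenvectorUnitary : Matrix (Fin n) (Fin n) ℂ) *
      Matrix.diagonal (fun i => (f (h.eigenvalues i) : ℂ)) *
      star (h.eigenvectorUnitary : Matrix (Fin n) (Fin n) ℂ)
  else 0

/-- Spectral power `M ^ s` of a Hermitian matrix, via the functional calculus. -/
noncomputable def matRpow {n : ℕ} (M : Matrix (Fin n) (Fin n) ℂ) (s : ℝ) :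
    Matrix (Fin n) (Fin n) ℂ :=
  matFun (fun x => x ^ s) M

/-- The quantum `s`-variance `Var^{(s)}_Γ(A) = Tr[A Γ^s A Γ^{1-s}] - (Tr[A Γ])²`. -/
noncomputable def qVar {n : ℕ} (Γ A : Matrix (Fin n) (Fin n) ℂ) (s : ℝ) : ℂ :=
  (A * matRpow Γ s * A * matRpow Γ (1 - s)).trace - ((A * Γ).trace) ^ 2

namespace LinResp

open NormedSpace

variable {n : ℕ}

attribute [local instance] Matrix.linftyOpSemiNormedRing Matrix.linftyOpNormedRing
  Matrix.linftyOpNormedAlgebra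

/-- The trace as a continuous `ℝ`-linear map. -/
noncomputable def trCLM (n : ℕ) : Matrix (Fin n) (Fin n) ℂ →L[ℝ] ℂ :=
  LinearMap.toContinuousLinearMap ((Matrix.traceLinearMap (Fin n) ℂ ℂ).restrictScalars ℝ)

lemma hasDerivAt_exp_sm (X : Matrix (Fin n) (Fin n) ℂ) (s : ℝ) :
    HasDerivAt (fun u : ℝ => exp (u • X)) (exp (s • X) * X) s := by
  exact hasDerivAt_exp_smul_const (𝕂 := ℝ) X s

lemma hasDerivAt_exp_sm' (X : Matrix (Fin n) (Fin n) ℂ) (s : ℝ) :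
    HasDerivAt (fun u : ℝ => exp (u • X)) (X * exp (s • X)) s := by
  exact hasDerivAt_exp_smul_const' (𝕂 := ℝ) X s

lemma cont_exp_sm (X : Matrix (Fin n) (Fin n) ℂ) :
    Continuous (fun s : ℝ => exp (s • X)) :=
  exp_continuous.comp (continuous_id.smul continuous_const)

lemma cont_integrand (K A C : Matrix (Fin n) (Fin n) ℂ) :
    Continuous fun s : ℝ => (C * (exp (s • K) * A * exp ((1 - s) • K))).trace := by
  have h : Continuous fun s : ℝ => C * (exp (s • K) * A * exp ((1 - s) • K)) :=
    continuous_const.mul (((cont_exp_sm K).mul continuous_const).mul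
      (exp_continuous.comp ((continuous_const.sub continuous_id).smul continuous_const)))
  exact (trCLM n).continuous.comp h

/-- Duhamel-type identity for the trace of the perturbed exponential. -/
lemma trace_exp_duhamel (M A C : Matrix (Fin n) (Fin n) ℂ) (ε : ℝ) :
    (C * exp (M + (ε : ℂ) • A)).trace
      = (C * exp M).trace
        + (ε : ℂ) * ∫ s in (0:ℝ)..1,
            (C * (exp (s • (M + (ε : ℂ) • A)) * A * exp ((1 - s) • M))).trace := by
  set X := M + (ε : ℂ) • A with hX
  have hder : ∀ s : ℝ, HasDerivAt
      (fun s : ℝ => trCLM n (C * (exp (s • X) * exp ((1 - s) • M))))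
      ((ε : ℂ) * (C * (exp (s • X) * A * exp ((1 - s) • M))).trace) s := by
    intro s
    have h1 : HasDerivAt (fun s : ℝ => exp (s • X)) (exp (s • X) * X) s :=
      hasDerivAt_exp_sm X s
    have hin : HasDerivAt (fun s : ℝ => 1 - s) (-1) s := by
      simpa using (hasDerivAt_id s).const_sub 1
    have h2 : HasDerivAt (fun s : ℝ => exp ((1 - s) • M))
        ((-1 : ℝ) • (M * exp ((1 - s) • M))) s :=
      (hasDerivAt_exp_sm' M (1 - s)).scomp s hin
    have h3 := (h1.mul h2).const_mul C
    have h4 := (trCLM n).hasFDerivAt.comp_hasDerivAt s h3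
    convert h4 using 1
    · rfl
    · rfl
    have hcomm : exp (s • X) * X = X * exp (s • X) := by
      have : Commute X (s • X) := (Commute.refl X).smul_right s
      exact (this.exp_right).symm.eq
    show (ε : ℂ) * (C * (exp (s • X) * A * exp ((1 - s) • M))).trace
      = (C * (exp (s • X) * X * exp ((1 - s) • M)
          + exp (s • X) * ((-1 : ℝ) • (M * exp ((1 - s) • M))))).trace
    rw [hcomm]
    have : X * exp (s • X) * exp ((1 - s) • M)
        + exp (s • X) * ((-1 : ℝ) • (M * exp ((1 - s) • M)))
        = (ε : ℂ) • (exp (s • X) * A * exp ((1 - s) • M)) := by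
      rw [← hcomm]
      simp only [neg_one_smul, mul_neg, ← sub_eq_add_neg, ← mul_assoc, ← sub_mul, ← mul_sub]
      have hXM : X - M = (ε : ℂ) • A := by rw [hX]; abel
      rw [hXM]
      simp [mul_smul_comm, smul_mul_assoc]
    rw [this, mul_smul_comm, Matrix.trace_smul, smul_eq_mul]
  have hcont : Continuous fun s : ℝ =>
      (ε : ℂ) * (C * (exp (s • X) * A * exp ((1 - s) • M))).trace := by
    apply continuous_const.mul
    have : Continuous fun s : ℝ => C * (exp (s • X) * A * exp ((1 - s) • M)) := by
      exact continuous_const.mul (((cont_exp_sm X).mul continuous_const).mul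
        (exp_continuous.comp ((continuous_const.sub continuous_id).smul continuous_const)))
    exact (trCLM n).continuous.comp this
  have hInt := intervalIntegral.integral_eq_sub_of_hasDerivAt
    (f := fun s : ℝ => trCLM n (C * (exp (s • X) * exp ((1 - s) • M))))
    (fun s _ => hder s) (hcont.intervalIntegrable 0 1)
  have h10 : trCLM n (C * (exp ((1:ℝ) • X) * exp ((1 - (1:ℝ)) • M)))
      - trCLM n (C * (exp ((0:ℝ) • X) * exp ((1 - (0:ℝ)) • M)))
      = (C * exp X).trace - (C * exp M).trace := by
    simp [trCLM]
  rw [h10] at hInt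
  rw [intervalIntegral.integral_const_mul] at hInt
  linear_combination -hInt

/-- Derivative of `ε ↦ Tr[C exp(M + εA)]` at `0`. -/
lemma hasDerivAt_trace_exp (M A C : Matrix (Fin n) (Fin n) ℂ) :
    HasDerivAt (fun ε : ℝ => (C * exp (M + (ε : ℂ) • A)).trace)
      (∫ s in (0:ℝ)..1, (C * (exp (s • M) * A * exp ((1 - s) • M))).trace) 0 := by
  set Φ : ℝ → ℂ := fun ε => ∫ s in (0:ℝ)..1,
      (C * (exp (s • (M + (ε : ℂ) • A)) * A * exp ((1 - s) • M))).trace with hΦ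
  have hΦcont : Continuous Φ := by
    apply intervalIntegral.continuous_parametric_intervalIntegral_of_continuous'
    have h1 : Continuous fun p : ℝ × ℝ => exp (p.2 • (M + (p.1 : ℂ) • A)) :=
      exp_continuous.comp (continuous_snd.smul
        (continuous_const.add ((Complex.continuous_ofReal.comp continuous_fst).smul
          continuous_const)))
    have h2 : Continuous fun p : ℝ × ℝ => exp ((1 - p.2) • M) :=
      exp_continuous.comp ((continuous_const.sub continuous_snd).smul continuous_const)
    exact (trCLM n).continuous.comp
      (continuous_const.mul ((h1.mul continuous_const).mul h2))
  have hΦ0 : Φ 0 = ∫ s in (0:ℝ)..1,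
      (C * (exp (s • M) * A * exp ((1 - s) • M))).trace := by
    simp [hΦ]
  rw [← hΦ0, hasDerivAt_iff_tendsto_slope]
  have hslope : ∀ ε : ℝ, ε ≠ 0 →
      slope (fun ε : ℝ => (C * exp (M + (ε : ℂ) • A)).trace) 0 ε = Φ ε := by
    intro ε hε
    rw [slope_def_module]
    have hf0 : (C * exp (M + (0 : ℂ) • A)).trace = (C * exp M).trace := by
      norm_num
    rw [sub_zero, Complex.ofReal_zero, hf0, trace_exp_duhamel M A C ε]
    rw [add_sub_cancel_left, Complex.real_smul]
    rw [← mul_assoc]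
    rw [← Complex.ofReal_mul, inv_mul_cancel₀ hε, Complex.ofReal_one, one_mul, hΦ]
  refine Filter.Tendsto.congr' ?_ ((hΦcont.tendsto 0).mono_left nhdsWithin_le_nhds)
  filter_upwards [self_mem_nhdsWithin] with ε hε
  exact (hslope ε hε).symm

lemma exp_smul_herm {K : Matrix (Fin n) (Fin n) ℂ} (hK : K.IsHermitian) (t : ℝ) :
    exp (t • K) = (hK.eigenvectorUnitary : Matrix (Fin n) (Fin n) ℂ) *
      diagonal (fun i => (Real.exp (t * hK.eigenvalues i) : ℂ)) *
      star (hK.eigenvectorUnitary : Matrix (Fin n) (Fin n) ℂ) := by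
  set U := (hK.eigenvectorUnitary : Matrix (Fin n) (Fin n) ℂ) with hU
  have h1 : t • K = U * diagonal (fun i => ((t * hK.eigenvalues i : ℝ) : ℂ)) * star U := by
    have hd : t • diagonal (RCLike.ofReal ∘ hK.eigenvalues)
        = diagonal (fun i => ((t * hK.eigenvalues i : ℝ) : ℂ)) := by
      ext i j
      simp [Matrix.diagonal_apply, Complex.real_smul, mul_ite, mul_zero]
    conv_lhs => rw [hK.spectral_theorem, Unitary.conjStarAlgAut_apply]
    rw [← smul_mul_assoc, ← mul_smul_comm, hd]
  rw [h1]
  let u : (Matrix (Fin n) (Fin n) ℂ)ˣ := Unitary.toUnits hK.eigenvectorUnitary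
  have hu : (u : Matrix (Fin n) (Fin n) ℂ) = U := rfl
  have hui : ((u⁻¹ : (Matrix (Fin n) (Fin n) ℂ)ˣ) : Matrix (Fin n) (Fin n) ℂ) = star U := rfl
  rw [← hui, ← hu, Matrix.exp_units_conj u, Matrix.exp_diagonal, Pi.exp_def]
  congr 1
  congr 1
  ext i
  simp [← Complex.exp_eq_exp_ℂ, Complex.ofReal_exp]

lemma cfc_herm {K : Matrix (Fin n) (Fin n) ℂ} (hK : K.IsHermitian) (φ : ℝ → ℝ) :
    cfc φ K = (hK.eigenvectorUnitary : Matrix (Fin n) (Fin n) ℂ) *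
      diagonal (fun i => (φ (hK.eigenvalues i) : ℂ)) *
      star (hK.eigenvectorUnitary : Matrix (Fin n) (Fin n) ℂ) := by
  rw [hK.cfc_eq]
  rfl

lemma matFun_eq_cfc (f : ℝ → ℝ) {M : Matrix (Fin n) (Fin n) ℂ} (hM : M.IsHermitian) :
    matFun f M = cfc f M := by
  rw [cfc_herm hM, matFun, dif_pos hM]

lemma smul_triple (c : ℝ) (U V : Matrix (Fin n) (Fin n) ℂ) (d : Fin n → ℝ) :
    (c : ℂ) • (U * diagonal (fun i => (d i : ℂ)) * V)
      = U * diagonal (fun i => ((c * d i : ℝ) : ℂ)) * V := by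
  rw [← smul_mul_assoc, ← mul_smul_comm]
  congr 2
  ext i j
  simp [Matrix.diagonal_apply, mul_ite, mul_zero]

lemma hermDiag (d : Fin n → ℝ) (U : Matrix (Fin n) (Fin n) ℂ) :
    (U * diagonal (fun i => (d i : ℂ)) * star U).IsHermitian := by
  rw [Matrix.star_eq_conjTranspose]
  apply Matrix.isHermitian_mul_mul_conjTranspose
  show _ = _
  rw [Matrix.diagonal_conjTranspose]
  congr 1
  ext i
  simp [Pi.star_def, Complex.conj_ofReal]

lemma rpow_gibbs_fun (z : ℝ) (hz : 0 < z) (s x : ℝ) :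
    (z⁻¹ * Real.exp x) ^ s = z ^ (-s) * Real.exp (s * x) := by
  rw [Real.mul_rpow (by positivity) (Real.exp_nonneg _), Real.inv_rpow hz.le,
    ← Real.rpow_neg hz.le, Real.rpow_def_of_pos (Real.exp_pos x), Real.log_exp, mul_comm x s]

lemma matRpow_gibbs {K Γ : Matrix (Fin n) (Fin n) ℂ} (hK : K.IsHermitian) (z : ℝ) (hz : 0 < z)
    (hΓ : Γ = (z : ℂ)⁻¹ • exp K) (s : ℝ) :
    matRpow Γ s = ((z ^ (-s) : ℝ) : ℂ) • exp (s • K) := by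
  have he1 : exp K = (hK.eigenvectorUnitary : Matrix (Fin n) (Fin n) ℂ) *
      diagonal (fun i => ((Real.exp (hK.eigenvalues i) : ℝ) : ℂ)) *
      star (hK.eigenvectorUnitary : Matrix (Fin n) (Fin n) ℂ) := by
    have := exp_smul_herm hK 1
    rw [one_smul] at this
    simpa using this
  have hg : Γ = cfc (fun x => z⁻¹ * Real.exp x) K := by
    rw [hΓ, cfc_herm hK, ← Complex.ofReal_inv, he1, smul_triple]
  have hΓherm : Γ.IsHermitian := by
    rw [hΓ, ← Complex.ofReal_inv, he1, smul_triple]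
    exact hermDiag _ _
  have hsa : IsSelfAdjoint K := hK
  rw [matRpow, matFun_eq_cfc _ hΓherm, hg,
    ← cfc_comp (fun x : ℝ => x ^ s) (fun x => z⁻¹ * Real.exp x) K hsa
      ((Matrix.finite_real_spectrum.image _).continuousOn _)
      (Matrix.finite_real_spectrum.continuousOn _)]
  have : (fun x : ℝ => x ^ s) ∘ (fun x => z⁻¹ * Real.exp x)
      = fun x => z ^ (-s) * Real.exp (s * x) := by
    ext x
    exact rpow_gibbs_fun z hz s x
  rw [this, cfc_herm hK, exp_smul_herm hK s, smul_triple]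

lemma trace_exp_herm {K : Matrix (Fin n) (Fin n) ℂ} (hK : K.IsHermitian) :
    (exp K).trace = ((∑ i, Real.exp (hK.eigenvalues i) : ℝ) : ℂ) := by
  have he1 := exp_smul_herm hK 1
  rw [one_smul] at he1
  simp only [one_mul] at he1
  rw [he1, Matrix.trace_mul_cycle]
  have h1 : star (hK.eigenvectorUnitary : Matrix (Fin n) (Fin n) ℂ) *
      (hK.eigenvectorUnitary : Matrix (Fin n) (Fin n) ℂ) = 1 :=
    Unitary.coe_star_mul_self hK.eigenvectorUnitary
  rw [h1, one_mul, Matrix.trace_diagonal]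
  push_cast
  simp

end LinResp

open LinResp NormedSpace in
/-- **Linear response is the averaged quantum variance.**  For Hermitian `H, A` and the Gibbs
state `Γ = exp(-H)/Tr[exp(-H)]`, the map `ε ↦ Tr[A exp(-H+εA)]/Tr[exp(-H+εA)]` is
differentiable at `ε = 0` with derivative `∫₀¹ Var^{(s)}_Γ(A) ds`. -/
theorem linear_response_eq_averaged_variance {n : ℕ}
    (H A : Matrix (Fin n) (Fin n) ℂ) (hH : H.IsHermitian) (hA : A.IsHermitian)
    (Γ : Matrix (Fin n) (Fin n) ℂ)
    (hΓ : Γ = ((NormedSpace.exp (-H)).trace)⁻¹ • NormedSpace.exp (-H)) :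
    HasDerivAt
      (fun ε : ℝ =>
        (A * NormedSpace.exp (-H + (ε : ℂ) • A)).trace /
          (NormedSpace.exp (-H + (ε : ℂ) • A)).trace)
      (∫ s in (0:ℝ)..1, qVar Γ A s) 0 := by
  rcases Nat.eq_zero_or_pos n with hn | hn
  · subst hn
    have htr : ∀ M : Matrix (Fin 0) (Fin 0) ℂ, M.trace = 0 := fun M => by
      simp [Matrix.trace]
    have hfun : (fun ε : ℝ =>
        (A * NormedSpace.exp (-H + (ε : ℂ) • A)).trace /
          (NormedSpace.exp (-H + (ε : ℂ) • A)).trace) = fun _ => (0:ℂ) := by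
      funext ε
      rw [htr, htr]
      simp
    have hint : (∫ s in (0:ℝ)..1, qVar Γ A s) = 0 := by
      have : ∀ s : ℝ, qVar Γ A s = 0 := fun s => by
        rw [qVar, htr, htr]
        ring
      simp [this]
    rw [hfun, hint]
    exact hasDerivAt_const 0 0
  · set K := -H with hKdef
    have hK : K.IsHermitian := hH.neg
    set z : ℝ := ∑ i, Real.exp (hK.eigenvalues i) with hzdef
    have hz : 0 < z := by
      apply Finset.sum_pos (fun i _ => Real.exp_pos _)
      have : Nonempty (Fin n) := Fin.pos_iff_nonempty.mp hn
      exact Finset.univ_nonempty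
    have hZ : (exp K).trace = (z : ℂ) := trace_exp_herm hK
    have hZ0 : (exp K).trace ≠ 0 := by
      rw [hZ]
      exact_mod_cast hz.ne'
    have hΓ' : Γ = (z : ℂ)⁻¹ • exp K := by rw [hΓ, hZ]
    -- derivative of the numerator
    have hN := hasDerivAt_trace_exp K A A
    -- derivative of the denominator
    have hD : HasDerivAt (fun ε : ℝ => (exp (K + (ε : ℂ) • A)).trace)
        ((A * exp K).trace) 0 := by
      have h := hasDerivAt_trace_exp K A 1
      simp only [one_mul] at h
      convert h using 1
      have hint : ∀ s : ℝ, (exp (s • K) * A * exp ((1 - s) • K)).trace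
          = (A * exp K).trace := by
        intro s
        rw [Matrix.trace_mul_cycle]
        have hee : exp ((1 - s) • K) * exp (s • K) = exp K := by
          rw [← Matrix.exp_add_of_commute _ _ (((Commute.refl K).smul_left _).smul_right _),
            ← add_smul, sub_add_cancel, one_smul]
        rw [hee, Matrix.trace_mul_comm]
      rw [intervalIntegral.integral_congr (g := fun _ : ℝ => (A * exp K).trace)
        (fun s _ => hint s)]
      simp
    have hd0 : (fun ε : ℝ => (exp (K + (ε : ℂ) • A)).trace) 0 ≠ 0 := by
      simpa using hZ0
    have hQ := hN.div hD hd0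
    convert hQ using 1
    · rfl
    · rfl
    -- now the value computation
    simp only [Complex.ofReal_zero, zero_smul, add_zero]
    rw [hZ]
    set N0 : ℂ := (A * exp K).trace with hN0
    set NI : ℂ := ∫ s in (0:ℝ)..1,
        (A * (exp (s • K) * A * exp ((1 - s) • K))).trace with hNI
    have hqs : ∀ s : ℝ, qVar Γ A s
        = (z : ℂ)⁻¹ * (A * (exp (s • K) * A * exp ((1 - s) • K))).trace
          - ((z : ℂ)⁻¹ * N0) ^ 2 := by
      intro s
      have hc : ((z ^ (-s) : ℝ) : ℂ) * ((z ^ (-(1 - s)) : ℝ) : ℂ) = (z : ℂ)⁻¹ := by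
        have hsum : (-s) + -(1 - s) = -1 := by ring
        rw [← Complex.ofReal_mul, ← Real.rpow_add hz, hsum, Real.rpow_neg_one,
          Complex.ofReal_inv]
      have hAΓ : (A * Γ).trace = (z : ℂ)⁻¹ * N0 := by
        rw [hΓ', mul_smul_comm, Matrix.trace_smul, smul_eq_mul, hN0]
      rw [qVar, matRpow_gibbs hK z hz hΓ' s, matRpow_gibbs hK z hz hΓ' (1 - s), hAΓ]
      congr 1
      simp only [mul_smul_comm, smul_mul_assoc, smul_smul, Matrix.trace_smul, smul_eq_mul,
        mul_assoc]
      rw [← mul_assoc, mul_comm (((z ^ (-(1 - s)) : ℝ)) : ℂ) (((z ^ (-s) : ℝ)) : ℂ), hc]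
    rw [intervalIntegral.integral_congr (g := fun s : ℝ =>
        (z : ℂ)⁻¹ * (A * (exp (s • K) * A * exp ((1 - s) • K))).trace
          - ((z : ℂ)⁻¹ * N0) ^ 2) (fun s _ => hqs s)]
    rw [intervalIntegral.integral_sub
      (f := fun s : ℝ => (z : ℂ)⁻¹ * (A * (exp (s • K) * A * exp ((1 - s) • K))).trace)
      ((continuous_const.mul (cont_integrand K A A)).intervalIntegrable 0 1)
      intervalIntegrable_const,
      intervalIntegral.integral_const_mul, intervalIntegral.integral_const]
    have hz0 : (z : ℂ) ≠ 0 := by exact_mod_cast hz.ne'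
    rw [← hNI]
    simp only [sub_zero, one_smul]
    field_simp
end

section
/- Let Γ be a positive definite n×n density matrix and A a Hermitian n×n complex matrix. Then for every s ∈ [0,1], 0 ≤ Var^{(s)}_Γ(A) ≤ Var^{(0)}_Γ(A), where Var^{(0)}_Γ(A) = Tr[A²Γ] − (Tr[AΓ])². -/
open Matrix
open scoped ComplexOrder

/-- The scalar inequality underlying the quantum variance bounds. -/
lemma qVar_real_ineq {n : ℕ} (lam : Fin n → ℝ) (b : Fin n → Fin n → ℝ) (d : Fin n → ℝ)
    (hlam : ∀ i, 0 < lam i) (hsum : ∑ i, lam i = 1)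
    (hb : ∀ i j, 0 ≤ b i j) (hbsymm : ∀ i j, b i j = b j i) (hbd : ∀ i, b i i = d i ^ 2)
    {s : ℝ} (hs0 : 0 ≤ s) (hs1 : s ≤ 1) :
    (∑ i, d i * lam i) ^ 2 ≤ ∑ i, ∑ j, lam j ^ s * lam i ^ (1 - s) * b i j ∧
      ∑ i, ∑ j, lam j ^ s * lam i ^ (1 - s) * b i j ≤ ∑ i, ∑ j, lam i * b i j := by
  have hlam' : ∀ i, (0:ℝ) ≤ lam i := fun i => (hlam i).le
  have hterm : ∀ i j, (0:ℝ) ≤ lam j ^ s * lam i ^ (1 - s) * b i j := fun i j =>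
    mul_nonneg (mul_nonneg (Real.rpow_nonneg (hlam' j) s) (Real.rpow_nonneg (hlam' i) _))
      (hb i j)
  constructor
  · calc (∑ i, d i * lam i) ^ 2 ≤ ∑ i, lam i * d i ^ 2 := by
          have h := Finset.sum_mul_sq_le_sq_mul_sq Finset.univ
            (fun i => Real.sqrt (lam i)) (fun i => Real.sqrt (lam i) * d i)
          have e1 : (∑ i, Real.sqrt (lam i) * (Real.sqrt (lam i) * d i)) = ∑ i, d i * lam i :=
            Finset.sum_congr rfl fun i _ => by
              rw [← mul_assoc, Real.mul_self_sqrt (hlam' i)]; ring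
          have e2 : (∑ i, Real.sqrt (lam i) ^ 2) = ∑ i, lam i :=
            Finset.sum_congr rfl fun i _ => Real.sq_sqrt (hlam' i)
          have e3 : (∑ i, (Real.sqrt (lam i) * d i) ^ 2) = ∑ i, lam i * d i ^ 2 :=
            Finset.sum_congr rfl fun i _ => by
              rw [mul_pow, Real.sq_sqrt (hlam' i)]
          rw [e1, e2, e3, hsum, one_mul] at h
          exact h
      _ ≤ ∑ i, ∑ j, lam j ^ s * lam i ^ (1 - s) * b i j := by
          refine Finset.sum_le_sum fun i _ => ?_
          have hdiag : lam i * d i ^ 2 = lam i ^ s * lam i ^ (1 - s) * b i i := by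
            rw [hbd i, ← Real.rpow_add (hlam i)]
            norm_num
          rw [hdiag]
          exact Finset.single_le_sum (fun j _ => hterm i j) (Finset.mem_univ i)
  · have key : ∀ i j, lam j ^ s * lam i ^ (1 - s) * b i j
        ≤ (s * lam j + (1 - s) * lam i) * b i j := fun i j =>
      mul_le_mul_of_nonneg_right
        (Real.geom_mean_le_arith_mean2_weighted hs0 (by linarith) (hlam' j) (hlam' i) (by ring))
        (hb i j)
    calc ∑ i, ∑ j, lam j ^ s * lam i ^ (1 - s) * b i j
        ≤ ∑ i, ∑ j, (s * lam j + (1 - s) * lam i) * b i j :=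
          Finset.sum_le_sum fun i _ => Finset.sum_le_sum fun j _ => key i j
      _ = ∑ i, ∑ j, lam i * b i j := by
          have hswap : (∑ i, ∑ j, lam j * b i j) = ∑ i, ∑ j, lam i * b i j := by
            rw [Finset.sum_comm]
            exact Finset.sum_congr rfl fun i _ => Finset.sum_congr rfl fun j _ => by
              rw [hbsymm]
          have expand : (∑ i, ∑ j, (s * lam j + (1 - s) * lam i) * b i j)
              = s * (∑ i, ∑ j, lam j * b i j) + (1 - s) * (∑ i, ∑ j, lam i * b i j) := by
            rw [Finset.mul_sum, Finset.mul_sum, ← Finset.sum_add_distrib]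
            refine Finset.sum_congr rfl fun i _ => ?_
            rw [Finset.mul_sum, Finset.mul_sum, ← Finset.sum_add_distrib]
            exact Finset.sum_congr rfl fun j _ => by ring
          rw [expand, hswap]; ring

/-- For a positive definite density matrix `Γ` and Hermitian `A`,
`0 ≤ Var^{(s)}_Γ(A) ≤ Var^{(0)}_Γ(A) = Tr[A²Γ] - (Tr[AΓ])²` for all `s ∈ [0,1]`
(inequalities in the complex order, so in particular these quantities are real). -/
theorem qVar_nonneg_and_le_qVar_zero {n : ℕ}
    (Γ A : Matrix (Fin n) (Fin n) ℂ) (hΓ : Γ.PosDef) (hΓtr : Γ.trace = 1)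
    (hA : A.IsHermitian) (s : ℝ) (hs : s ∈ Set.Icc (0:ℝ) 1) :
    0 ≤ qVar Γ A s ∧ qVar Γ A s ≤ (A * A * Γ).trace - ((A * Γ).trace) ^ 2 := by
  obtain ⟨hs0, hs1⟩ := hs
  have hH : Γ.IsHermitian := hΓ.1
  set U : Matrix (Fin n) (Fin n) ℂ := (hH.eigenvectorUnitary : Matrix (Fin n) (Fin n) ℂ)
    with hUdef
  have hU1 : U * star U = 1 := (Matrix.mem_unitaryGroup_iff).mp hH.eigenvectorUnitary.2
  have hUU : star U * U = 1 := (Matrix.mem_unitaryGroup_iff').mp hH.eigenvectorUnitary.2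
  set lam : Fin n → ℝ := hH.eigenvalues with hlamdef
  set B : Matrix (Fin n) (Fin n) ℂ := star U * A * U with hBdef
  have hBherm : B.IsHermitian := by
    show Bᴴ = B
    simp [hBdef, Matrix.conjTranspose_mul, Matrix.mul_assoc, hA.eq,
      Matrix.star_eq_conjTranspose, Matrix.conjTranspose_conjTranspose]
  -- spectral theorem for Γ
  have hspec : Γ = U * Matrix.diagonal (fun i => ((lam i : ℝ) : ℂ)) * star U := by
    conv_lhs => rw [hH.spectral_theorem]
    rfl
  -- matRpow as conjugated diagonal
  have hpow : ∀ u : ℝ, matRpow Γ u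
      = U * Matrix.diagonal (fun i => ((lam i ^ u : ℝ) : ℂ)) * star U := by
    intro u
    rw [matRpow, matFun, dif_pos hH]
  have tdiag : ∀ (M : Matrix (Fin n) (Fin n) ℂ) (v : Fin n → ℂ),
      (M * Matrix.diagonal v).trace = ∑ i, M i i * v i := by
    intro M v
    simp [Matrix.trace, Matrix.mul_diagonal]
  -- trace of A * diag-conjugation products
  have key : ∀ v : Fin n → ℂ, (A * (U * Matrix.diagonal v * star U)).trace
      = ∑ i, B i i * v i := by
    intro v
    have e : A * (U * Matrix.diagonal v * star U) = U * (B * Matrix.diagonal v) * star U := by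
      simp only [hBdef, Matrix.mul_assoc]
      rw [← Matrix.mul_assoc U (star U), hU1, Matrix.one_mul]
    rw [e, Matrix.trace_mul_cycle, ← Matrix.mul_assoc, hUU, Matrix.one_mul, tdiag]
  have key2 : ∀ v : Fin n → ℂ, (A * A * (U * Matrix.diagonal v * star U)).trace
      = ∑ i, ∑ j, (B i j * B j i) * v i := by
    intro v
    have e : A * A * (U * Matrix.diagonal v * star U)
        = U * (B * B * Matrix.diagonal v) * star U := by
      simp only [hBdef, Matrix.mul_assoc]
      rw [← Matrix.mul_assoc U (star U), hU1, Matrix.one_mul,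
        ← Matrix.mul_assoc U (star U), hU1, Matrix.one_mul]
    rw [e, Matrix.trace_mul_cycle, ← Matrix.mul_assoc, hUU, Matrix.one_mul, tdiag]
    refine Finset.sum_congr rfl fun i _ => ?_
    rw [Matrix.mul_apply, Finset.sum_mul]
  have htr : ∀ u t : ℝ, (A * matRpow Γ u * A * matRpow Γ t).trace
      = ∑ i, ∑ j, ((lam j ^ u : ℝ) : ℂ) * ((lam i ^ t : ℝ) : ℂ) * (B i j * B j i) := by
    intro u t
    rw [hpow, hpow]
    have e : A * (U * Matrix.diagonal (fun i => ((lam i ^ u : ℝ) : ℂ)) * star U) * A *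
        (U * Matrix.diagonal (fun i => ((lam i ^ t : ℝ) : ℂ)) * star U)
        = U * (B * Matrix.diagonal (fun i => ((lam i ^ u : ℝ) : ℂ)) * B *
            Matrix.diagonal (fun i => ((lam i ^ t : ℝ) : ℂ))) * star U := by
      simp only [hBdef, Matrix.mul_assoc]
      rw [← Matrix.mul_assoc U (star U), hU1, Matrix.one_mul]
    rw [e, Matrix.trace_mul_cycle, ← Matrix.mul_assoc, hUU, Matrix.one_mul, tdiag]
    refine Finset.sum_congr rfl fun i _ => ?_
    rw [Matrix.mul_apply, Finset.sum_mul]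
    refine Finset.sum_congr rfl fun j _ => ?_
    rw [Matrix.mul_diagonal]
    ring
  -- real data
  set d : Fin n → ℝ := fun i => (B i i).re with hddef
  set b : Fin n → Fin n → ℝ := fun i j => Complex.normSq (B i j) with hbdef2
  have hBji : ∀ i j, B j i = (starRingEnd ℂ) (B i j) := fun i j => by
    rw [← hBherm.apply j i]; rfl
  have hBij : ∀ i j, B i j * B j i = ((b i j : ℝ) : ℂ) := by
    intro i j
    rw [hBji i j, Complex.mul_conj]
  have hBii : ∀ i, B i i = ((d i : ℝ) : ℂ) := by
    intro i
    have h := hBji i i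
    exact (Complex.conj_eq_iff_re.mp h.symm).symm
  have hbsymm : ∀ i j, b i j = b j i := by
    intro i j
    show Complex.normSq (B i j) = Complex.normSq (B j i)
    rw [hBji i j, Complex.normSq_conj]
  have hbd : ∀ i, b i i = d i ^ 2 := by
    intro i
    show Complex.normSq (B i i) = d i ^ 2
    rw [hBii i, Complex.normSq_ofReal, sq]
  have hb : ∀ i j, 0 ≤ b i j := fun i j => Complex.normSq_nonneg _
  have hlampos : ∀ i, 0 < lam i := fun i => hΓ.eigenvalues_pos i
  have hsum : ∑ i, lam i = 1 := by
    have h : ((∑ i, lam i : ℝ) : ℂ) = 1 := by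
      push_cast
      rw [← hΓtr]
      conv_rhs => rw [hspec]
      rw [Matrix.trace_mul_comm, ← Matrix.mul_assoc, hUU, Matrix.one_mul,
        Matrix.trace_diagonal]
    exact_mod_cast h
  -- express the traces as real numbers
  have hT : (A * matRpow Γ s * A * matRpow Γ (1 - s)).trace
      = ((∑ i, ∑ j, lam j ^ s * lam i ^ (1 - s) * b i j : ℝ) : ℂ) := by
    rw [htr s (1 - s)]
    push_cast
    exact Finset.sum_congr rfl fun i _ => Finset.sum_congr rfl fun j _ => by
      rw [hBij i j]
  have hE : (A * Γ).trace = ((∑ i, d i * lam i : ℝ) : ℂ) := by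
    rw [hspec, key]
    push_cast
    exact Finset.sum_congr rfl fun i _ => by rw [hBii i]
  have hS : (A * A * Γ).trace = ((∑ i, ∑ j, lam i * b i j : ℝ) : ℂ) := by
    rw [hspec, key2]
    push_cast
    exact Finset.sum_congr rfl fun i _ => Finset.sum_congr rfl fun j _ => by
      rw [hBij i j]; ring
  have hq : qVar Γ A s
      = (((∑ i, ∑ j, lam j ^ s * lam i ^ (1 - s) * b i j) - (∑ i, d i * lam i) ^ 2 : ℝ) : ℂ) := by
    rw [qVar, hT, hE]
    push_cast
    ring
  obtain ⟨h1, h2⟩ := qVar_real_ineq lam b d hlampos hsum hb hbsymm hbd hs0 hs1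
  constructor
  · rw [hq]
    rw [Complex.zero_le_real]
    linarith
  · rw [hq, hS, hE]
    have : ((∑ i, d i * lam i : ℝ) : ℂ) ^ 2 = (((∑ i, d i * lam i) ^ 2 : ℝ) : ℂ) := by
      push_cast; ring
    rw [this, ← Complex.ofReal_sub, Complex.real_le_real]
    linarith
end

section
/- Let H and A be Hermitian n×n complex matrices and let Γ = exp(−H)/Tr[exp(−H)]. Then for every s ∈ [0,1], Var^{(0)}_Γ(A) ≤ Var^{(s)}_Γ(A) − (1/2) Tr[[A,H]² Γ], where [A,H] = AH − HA (note that [A,H]² is a negative semidefinite Hermitian matrix, so −(1/2)Tr[[A,H]²Γ] ≥ 0). -/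
open Matrix
open scoped ComplexOrder

section Aux

open Polynomial

lemma key_half (x y s : ℝ) (hy : 0 < y) (hxy : y ≤ x) (hs0 : 0 ≤ s) (hs1 : s ≤ 1) :
    (x ^ s - y ^ s) * (x ^ (1-s) - y ^ (1-s)) ≤ (Real.log x - Real.log y)^2 * (x + y) / 2 := by
  have hx : 0 < x := lt_of_lt_of_le hy hxy
  set u : ℝ := Real.log x - Real.log y with hu
  clear_value u
  have hu0 : 0 ≤ u := by rw [hu]; exact sub_nonneg.2 (Real.log_le_log hy hxy)
  have key : ∀ t : ℝ, 0 ≤ t → t ≤ 1 → x ^ t - y ^ t ≤ t * u * x ^ t := by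
    intro t ht0 ht1
    have h1 : y ^ t = x ^ t * Real.exp (-(t*u)) := by
      rw [← Real.exp_log hy, ← Real.exp_log hx, ← Real.exp_mul, ← Real.exp_mul, ← Real.exp_add]
      rw [hu]; ring_nf
    have h2 : 1 - t*u ≤ Real.exp (-(t*u)) := by
      have := Real.add_one_le_exp (-(t*u)); linarith
    have h3 : x ^ t * (1 - t*u) ≤ x ^ t * Real.exp (-(t*u)) :=
      mul_le_mul_of_nonneg_left h2 (Real.rpow_nonneg hx.le t)
    nlinarith [Real.rpow_nonneg hx.le t]
  have hA := key s hs0 hs1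
  have hB := key (1-s) (by linarith) (by linarith)
  have hA0 : 0 ≤ x ^ s - y ^ s := sub_nonneg.2 (Real.rpow_le_rpow hy.le hxy hs0)
  have hB0 : 0 ≤ x ^ (1-s) - y ^ (1-s) := sub_nonneg.2 (Real.rpow_le_rpow hy.le hxy (by linarith))
  have hxx : x ^ s * x ^ (1-s) = x := by
    rw [← Real.rpow_add hx]; norm_num
  have hmul : (x ^ s - y ^ s) * (x ^ (1-s) - y ^ (1-s)) ≤ (s*u*x^s) * ((1-s)*u*x^(1-s)) :=
    mul_le_mul hA hB hB0 (by nlinarith [Real.rpow_nonneg hx.le s])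
  have : (s*u*x^s) * ((1-s)*u*x^(1-s)) = s*(1-s)*u^2*x := by
    rw [show (s*u*x^s) * ((1-s)*u*x^(1-s)) = s*(1-s)*u^2*(x^s*x^(1-s)) by ring, hxx]
  nlinarith [mul_nonneg (mul_nonneg (sq_nonneg (2*s-1)) (sq_nonneg u)) hx.le, mul_nonneg (sq_nonneg u) hy.le, mul_nonneg (sq_nonneg u) hx.le]

lemma key_scalar (x y s : ℝ) (hx : 0 < x) (hy : 0 < y) (hs0 : 0 ≤ s) (hs1 : s ≤ 1) :
    0 ≤ x ^ s * y ^ (1-s) + y ^ s * x ^ (1-s) - x - y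
        + (1/2) * (Real.log x - Real.log y)^2 * (x + y) := by
  have hfact : (x ^ s - y ^ s) * (x ^ (1-s) - y ^ (1-s))
      = x + y - x ^ s * y ^ (1-s) - y ^ s * x ^ (1-s) := by
    have hxx : x ^ s * x ^ (1-s) = x := by rw [← Real.rpow_add hx]; norm_num
    have hyy : y ^ s * y ^ (1-s) = y := by rw [← Real.rpow_add hy]; norm_num
    nlinarith [hxx, hyy]
  rcases le_total y x with hxy | hxy
  · have := key_half x y s hy hxy hs0 hs1
    nlinarith
  · have := key_half y x s hx hxy hs0 hs1
    nlinarith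

noncomputable def conjAlgHom {n : ℕ} (U : Matrix (Fin n) (Fin n) ℂ)
    (hU : U ∈ Matrix.unitaryGroup (Fin n) ℂ) :
    Matrix (Fin n) (Fin n) ℂ →ₐ[ℝ] Matrix (Fin n) (Fin n) ℂ where
  toFun M := U * M * star U
  map_one' := by
    show U * 1 * star U = 1
    rw [mul_one]
    exact (Matrix.mem_unitaryGroup_iff).mp hU
  map_mul' A B := by
    have h : star U * U = 1 := (Matrix.mem_unitaryGroup_iff').mp hU
    show U * (A * B) * star U = (U * A * star U) * (U * B * star U)
    calc U * (A * B) * star U = (U * A) * (star U * U) * (B * star U) := by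
          rw [h, mul_one]; noncomm_ring
      _ = U * A * star U * (U * B * star U) := by noncomm_ring
  map_zero' := by simp
  map_add' A B := by show U * (A + B) * star U = _; noncomm_ring
  commutes' r := by
    have h1 : U * star U = 1 := (Matrix.mem_unitaryGroup_iff).mp hU
    simp only [Algebra.algebraMap_eq_smul_one]
    rw [Matrix.mul_smul, mul_one, Matrix.smul_mul, h1]

lemma aeval_conj {n : ℕ} (U : Matrix (Fin n) (Fin n) ℂ)
    (hU : U ∈ Matrix.unitaryGroup (Fin n) ℂ) (c : Fin n → ℝ) (P : Polynomial ℝ) :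
    aeval (U * Matrix.diagonal (fun i => (c i : ℂ)) * star U) P
      = U * Matrix.diagonal (fun i => ((P.eval (c i) : ℝ) : ℂ)) * star U := by
  have h1 : U * Matrix.diagonal (fun i => (c i : ℂ)) * star U
      = conjAlgHom U hU (Matrix.diagonalAlgHom ℝ (fun i => (c i : ℂ))) := rfl
  rw [h1, aeval_algHom_apply, aeval_algHom_apply]
  have h2 : aeval (fun i => (c i : ℂ)) P = fun i => ((P.eval (c i) : ℝ) : ℂ) := by
    funext i
    rw [show ((aeval fun j => ((c j : ℂ))) P) i
        = (Pi.evalAlgHom ℝ (fun _ : Fin n => ℂ) i) ((aeval fun j => ((c j : ℂ))) P) from rfl,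
      ← aeval_algHom_apply]
    simp only [Pi.evalAlgHom_apply]
    rw [show ((c i : ℂ)) = algebraMap ℝ ℂ (c i) from rfl, aeval_algebraMap_apply]
    simp [aeval_def, eval₂_eq_eval_map]
  rw [h2]
  rfl

lemma matFun_conj {n : ℕ} (f : ℝ → ℝ) (U : Matrix (Fin n) (Fin n) ℂ)
    (hU : U ∈ Matrix.unitaryGroup (Fin n) ℂ) (d : Fin n → ℝ) :
    matFun f (U * Matrix.diagonal (fun i => (d i : ℂ)) * star U)
      = U * Matrix.diagonal (fun i => ((f (d i) : ℝ) : ℂ)) * star U := by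
  set M := U * Matrix.diagonal (fun i => (d i : ℂ)) * star U with hMdef
  have hdiag : (Matrix.diagonal (fun i => (d i : ℂ))).IsHermitian := by
    rw [Matrix.isHermitian_diagonal_iff]
    intro i
    exact Complex.conj_ofReal (d i)
  have hM : M.IsHermitian := by
    rw [hMdef, Matrix.star_eq_conjTranspose]
    exact Matrix.isHermitian_mul_mul_conjTranspose U hdiag
  unfold matFun
  rw [dif_pos hM]
  set W : Matrix (Fin n) (Fin n) ℂ := (hM.eigenvectorUnitary : Matrix (Fin n) (Fin n) ℂ)
  have hW : W ∈ Matrix.unitaryGroup (Fin n) ℂ := hM.eigenvectorUnitary.2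
  set e := hM.eigenvalues
  have hspec : M = W * Matrix.diagonal (fun i => (e i : ℂ)) * star W := by
    have := hM.spectral_theorem
    rw [Unitary.conjStarAlgAut_apply] at this
    exact this
  set T : Finset ℝ := (Finset.image d Finset.univ) ∪ (Finset.image e Finset.univ) with hT
  set P : Polynomial ℝ := Lagrange.interpolate T id f with hP
  have hPeval : ∀ r ∈ T, P.eval r = f r := by
    intro r hr
    exact Lagrange.eval_interpolate_at_node f (Set.injOn_id _) hr
  have e1 : Polynomial.aeval M P = U * Matrix.diagonal (fun i => ((f (d i) : ℝ) : ℂ)) * star U := by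
    rw [hMdef, aeval_conj U hU d P]
    have h3 : (fun i => ((P.eval (d i) : ℝ) : ℂ)) = fun i => ((f (d i) : ℝ) : ℂ) := by
      funext i
      rw [hPeval (d i) (Finset.mem_union_left _ (Finset.mem_image_of_mem d (Finset.mem_univ i)))]
    rw [h3]
  have e2 : Polynomial.aeval M P
      = W * Matrix.diagonal (fun i => ((f (e i) : ℝ) : ℂ)) * star W := by
    conv_lhs => rw [hspec]
    rw [aeval_conj W hW e P]
    have h3 : (fun i => ((P.eval (e i) : ℝ) : ℂ)) = fun i => ((f (e i) : ℝ) : ℂ) := by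
      funext i
      rw [hPeval (e i) (Finset.mem_union_right _ (Finset.mem_image_of_mem e (Finset.mem_univ i)))]
    rw [h3]
  rw [← e2, e1]

end Aux

/-- For Hermitian `H, A` and the Gibbs state `Γ = exp(-H)/Tr[exp(-H)]`, for every `s ∈ [0,1]`,
`Var^{(0)}_Γ(A) ≤ Var^{(s)}_Γ(A) - ½ Tr[[A,H]² Γ]` (in the complex order). -/
theorem qVar_zero_le_qVar_sub_commutator {n : ℕ}
    (H A : Matrix (Fin n) (Fin n) ℂ) (hH : H.IsHermitian) (hA : A.IsHermitian)
    (Γ : Matrix (Fin n) (Fin n) ℂ)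
    (hΓ : Γ = ((NormedSpace.exp (-H)).trace)⁻¹ • NormedSpace.exp (-H))
    (s : ℝ) (hs : s ∈ Set.Icc (0:ℝ) 1) :
    qVar Γ A 0 ≤ qVar Γ A s - (1/2 : ℂ) * ((A * H - H * A) ^ 2 * Γ).trace := by
  obtain ⟨hs0, hs1⟩ := hs
  rcases isEmpty_or_nonempty (Fin n) with hn | hn
  · simp [qVar, Matrix.trace, Finset.univ_eq_empty]
  -- notation
  set U : Matrix (Fin n) (Fin n) ℂ := (hH.eigenvectorUnitary : Matrix (Fin n) (Fin n) ℂ) with hUdef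
  have hU : U ∈ Matrix.unitaryGroup (Fin n) ℂ := hH.eigenvectorUnitary.2
  have h1 : star U * U = 1 := (Matrix.mem_unitaryGroup_iff').mp hU
  have h2 : U * star U = 1 := (Matrix.mem_unitaryGroup_iff).mp hU
  have cancel : ∀ X : Matrix (Fin n) (Fin n) ℂ, X * star U * U = X := fun X => by
    rw [mul_assoc, h1, mul_one]
  have cancel2 : ∀ X : Matrix (Fin n) (Fin n) ℂ, X * U * star U = X := fun X => by
    rw [mul_assoc, h2, mul_one]
  set h : Fin n → ℝ := hH.eigenvalues with hhdef
  have hHspec : H = U * Matrix.diagonal (fun i => (h i : ℂ)) * star U := by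
    have := hH.spectral_theorem
    rw [Unitary.conjStarAlgAut_apply] at this
    exact this
  have trace_conj : ∀ X : Matrix (Fin n) (Fin n) ℂ, (U * X * star U).trace = X.trace := by
    intro X
    rw [Matrix.trace_mul_cycle, h1, one_mul]
  -- exponential
  have hexpH : NormedSpace.exp (-H)
      = U * Matrix.diagonal (fun i => ((Real.exp (-(h i)) : ℝ) : ℂ)) * star U := by
    have hneg : -H = U * Matrix.diagonal (fun i => ((-(h i) : ℝ) : ℂ)) * star U := by
      rw [hHspec]
      have hd : Matrix.diagonal (fun i => ((-(h i) : ℝ) : ℂ))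
          = -Matrix.diagonal (fun i => ((h i : ℝ) : ℂ)) := by
        have hfun : (fun i => ((-(h i) : ℝ) : ℂ)) = fun i => -((h i : ℝ) : ℂ) := by
          funext i; push_cast; ring
        rw [hfun, Matrix.diagonal_neg]
      rw [hd, mul_neg, neg_mul]
    have hUnit : IsUnit U := isUnit_iff_exists.mpr ⟨star U, h2, h1⟩
    have hinv : U⁻¹ = star U := Matrix.inv_eq_left_inv h1
    rw [hneg, ← hinv, Matrix.exp_conj U _ hUnit, Matrix.exp_diagonal]
    congr 1
    have hfun : (NormedSpace.exp fun i => ((-(h i) : ℝ) : ℂ))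
        = fun i => ((Real.exp (-(h i)) : ℝ) : ℂ) := by
      funext i
      rw [Pi.coe_exp, ← Complex.exp_eq_exp_ℂ, ← Complex.ofReal_exp]
    rw [hfun]
  -- trace of the exponential
  set Zr : ℝ := ∑ i, Real.exp (-(h i)) with hZrdef
  have hZrpos : 0 < Zr := Finset.sum_pos (fun i _ => Real.exp_pos _) Finset.univ_nonempty
  have hZtrace : (NormedSpace.exp (-H)).trace = ((Zr : ℝ) : ℂ) := by
    rw [hexpH, trace_conj, Matrix.trace_diagonal, hZrdef]
    push_cast
    rfl
  -- the Gibbs weights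
  set g : Fin n → ℝ := fun i => Zr⁻¹ * Real.exp (-(h i)) with hgdef
  have hgpos : ∀ i, 0 < g i := fun i => mul_pos (inv_pos.2 hZrpos) (Real.exp_pos _)
  have hΓU : Γ = U * Matrix.diagonal (fun i => ((g i : ℝ) : ℂ)) * star U := by
    have hd : Matrix.diagonal (fun i => ((g i : ℝ) : ℂ))
        = ((Zr : ℂ))⁻¹ • Matrix.diagonal (fun i => ((Real.exp (-(h i)) : ℝ) : ℂ)) := by
      have hfun2 : (fun i => ((g i : ℝ) : ℂ))
          = ((Zr : ℂ))⁻¹ • (fun i => ((Real.exp (-(h i)) : ℝ) : ℂ)) := by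
        funext i
        simp only [hgdef, Pi.smul_apply, smul_eq_mul]
        push_cast
        ring
      rw [hfun2, Matrix.diagonal_smul]
    rw [hΓ, hZtrace, hexpH, hd, mul_smul_comm, smul_mul_assoc]
  have hrpow : ∀ t : ℝ, matRpow Γ t
      = U * Matrix.diagonal (fun i => ((g i ^ t : ℝ) : ℂ)) * star U := by
    intro t
    rw [matRpow, hΓU, matFun_conj (fun x => x ^ t) U hU g]
  -- conjugated observable
  set B : Matrix (Fin n) (Fin n) ℂ := star U * A * U with hBdef
  have hAU : A = U * B * star U := by
    rw [hBdef, ← mul_assoc, ← mul_assoc, h2, one_mul, mul_assoc, h2, mul_one]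
  have hBsym : ∀ i j, B j i = (starRingEnd ℂ) (B i j) := by
    have hBH : B.IsHermitian := by
      rw [hBdef, Matrix.star_eq_conjTranspose]
      exact Matrix.isHermitian_conjTranspose_mul_mul U hA
    intro i j
    exact (hBH.apply j i).symm
  -- generic trace formula
  have hTrace : ∀ a b : Fin n → ℂ,
      (A * (U * Matrix.diagonal a * star U) * A * (U * Matrix.diagonal b * star U)).trace
        = ∑ i, ∑ j, B i j * a j * (B j i * b i) := by
    intro a b
    have hE : A * (U * Matrix.diagonal a * star U) * A * (U * Matrix.diagonal b * star U)
        = U * (B * Matrix.diagonal a * (B * Matrix.diagonal b)) * star U := by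
      rw [hAU]
      simp only [← mul_assoc]
      simp only [cancel]
    rw [hE, trace_conj]
    rw [Matrix.trace]
    apply Finset.sum_congr rfl
    intro i _
    rw [Matrix.diag_apply, Matrix.mul_apply]
    exact Finset.sum_congr rfl fun j _ => by rw [Matrix.mul_diagonal, Matrix.mul_diagonal]
  -- the commutator trace
  have hComm : ((A * H - H * A) ^ 2 * Γ).trace
      = ∑ i, ∑ j, (B i j * (h j : ℂ) - (h i : ℂ) * B i j)
          * (B j i * (h i : ℂ) - (h j : ℂ) * B j i) * ((g i : ℝ) : ℂ) := by
    set Dh : Matrix (Fin n) (Fin n) ℂ := Matrix.diagonal (fun i => ((h i : ℝ) : ℂ)) with hDh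
    set E : Matrix (Fin n) (Fin n) ℂ := B * Dh - Dh * B with hE
    have hCE : A * H - H * A = U * E * star U := by
      rw [hAU]
      conv_lhs => rw [hHspec]
      rw [hE]
      simp only [mul_sub, sub_mul, ← mul_assoc]
      simp only [cancel]
    have h5 : (A * H - H * A) ^ 2 * Γ
        = U * (E * E * Matrix.diagonal (fun i => ((g i : ℝ) : ℂ))) * star U := by
      rw [hCE, hΓU, pow_two]
      simp only [← mul_assoc]
      simp only [cancel]
    rw [h5, trace_conj, Matrix.trace]
    apply Finset.sum_congr rfl
    intro i _
    rw [Matrix.diag_apply, Matrix.mul_diagonal, Matrix.mul_apply, Finset.sum_mul]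
    apply Finset.sum_congr rfl
    intro j _
    rw [hE]
    simp only [Matrix.sub_apply, Matrix.mul_diagonal, Matrix.diagonal_mul, hDh]
  -- the real coefficient
  set c : Fin n → Fin n → ℝ := fun i j =>
    g j ^ s * g i ^ (1 - s) - g j ^ (0:ℝ) * g i ^ (1 - (0:ℝ))
      + (1/2) * (h i - h j)^2 * g i with hcdef
  -- the whole difference is a real sum
  have hexpr : qVar Γ A s - (1/2 : ℂ) * ((A * H - H * A) ^ 2 * Γ).trace - qVar Γ A 0
      = ((∑ i, ∑ j, Complex.normSq (B i j) * c i j : ℝ) : ℂ) := by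
    have combine : ∀ (F G K : Fin n → Fin n → ℂ),
        (∑ i, ∑ j, F i j) - (1/2 : ℂ) * (∑ i, ∑ j, K i j) - (∑ i, ∑ j, G i j)
          = ∑ i, ∑ j, (F i j - (1/2 : ℂ) * K i j - G i j) := by
      intro F G K
      rw [Finset.mul_sum, ← Finset.sum_sub_distrib, ← Finset.sum_sub_distrib]
      apply Finset.sum_congr rfl
      intro i _
      rw [Finset.mul_sum, ← Finset.sum_sub_distrib, ← Finset.sum_sub_distrib]
    calc qVar Γ A s - (1/2 : ℂ) * ((A * H - H * A) ^ 2 * Γ).trace - qVar Γ A 0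
        = (∑ i, ∑ j, B i j * ((g j ^ s : ℝ) : ℂ) * (B j i * ((g i ^ (1-s) : ℝ) : ℂ)))
          - (1/2 : ℂ) * (∑ i, ∑ j, (B i j * (h j : ℂ) - (h i : ℂ) * B i j)
              * (B j i * (h i : ℂ) - (h j : ℂ) * B j i) * ((g i : ℝ) : ℂ))
          - (∑ i, ∑ j, B i j * ((g j ^ (0:ℝ) : ℝ) : ℂ) * (B j i * ((g i ^ (1-(0:ℝ)) : ℝ) : ℂ))) := by
          simp only [qVar]
          rw [hrpow s, hrpow (1-s), hrpow (0:ℝ), hrpow (1-(0:ℝ)), hTrace, hTrace, hComm]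
          ring
      _ = ∑ i, ∑ j, (B i j * ((g j ^ s : ℝ) : ℂ) * (B j i * ((g i ^ (1-s) : ℝ) : ℂ))
            - (1/2 : ℂ) * ((B i j * (h j : ℂ) - (h i : ℂ) * B i j)
              * (B j i * (h i : ℂ) - (h j : ℂ) * B j i) * ((g i : ℝ) : ℂ))
            - B i j * ((g j ^ (0:ℝ) : ℝ) : ℂ) * (B j i * ((g i ^ (1-(0:ℝ)) : ℝ) : ℂ))) :=
          combine _ _ _
      _ = ((∑ i, ∑ j, Complex.normSq (B i j) * c i j : ℝ) : ℂ) := by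
          push_cast
          apply Finset.sum_congr rfl
          intro i _
          apply Finset.sum_congr rfl
          intro j _
          rw [hBsym i j]
          simp only [hcdef]
          push_cast
          linear_combination (((g j ^ s : ℝ) : ℂ) * ((g i ^ (1-s) : ℝ) : ℂ)
            - ((g j ^ (0:ℝ) : ℝ) : ℂ) * ((g i ^ (1-(0:ℝ)) : ℝ) : ℂ)
            + (1/2 : ℂ) * (((h i : ℝ) : ℂ) - ((h j : ℝ) : ℂ))^2 * ((g i : ℝ) : ℂ))
            * Complex.mul_conj (B i j)
  -- positivity of the real sum
  have hpos : 0 ≤ ∑ i, ∑ j, Complex.normSq (B i j) * c i j := by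
    have hlog : ∀ i, Real.log (g i) = -Real.log Zr - h i := by
      intro i
      simp only [hgdef]
      rw [Real.log_mul (inv_ne_zero hZrpos.ne') (Real.exp_ne_zero _), Real.log_inv, Real.log_exp]
      ring
    have hpair : ∀ i j, 0 ≤ c i j + c j i := by
      intro i j
      have hk := key_scalar (g i) (g j) s (hgpos i) (hgpos j) hs0 hs1
      have hl : (Real.log (g i) - Real.log (g j))^2 = (h i - h j)^2 := by
        rw [hlog i, hlog j]; ring
      rw [hl] at hk
      simp only [hcdef]
      have e1 : ∀ k, g k ^ (0:ℝ) = 1 := fun k => Real.rpow_zero _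
      have e2 : ∀ k, g k ^ (1-(0:ℝ)) = g k := fun k => by
        rw [show (1-(0:ℝ)) = 1 by norm_num, Real.rpow_one]
      rw [e1 i, e1 j, e2 i, e2 j]
      have hsq : (h j - h i)^2 = (h i - h j)^2 := by ring
      nlinarith [hk]
    have hswap : ∑ i, ∑ j, Complex.normSq (B i j) * c i j
        = ∑ i, ∑ j, Complex.normSq (B i j) * c j i := by
      rw [Finset.sum_comm]
      apply Finset.sum_congr rfl
      intro i _
      apply Finset.sum_congr rfl
      intro j _
      rw [hBsym i j, Complex.normSq_conj]
    have h0 : 0 ≤ ∑ i, ∑ j, (Complex.normSq (B i j) * c i j + Complex.normSq (B i j) * c j i) :=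
      Finset.sum_nonneg fun i _ => Finset.sum_nonneg fun j _ => by
        rw [← mul_add]
        exact mul_nonneg (Complex.normSq_nonneg _) (hpair i j)
    simp only [Finset.sum_add_distrib] at h0
    rw [← hswap] at h0
    linarith
  rw [← sub_nonneg]
  calc (0:ℂ) ≤ ((∑ i, ∑ j, Complex.normSq (B i j) * c i j : ℝ) : ℂ) :=
        Complex.zero_le_real.mpr hpos
    _ = _ := hexpr.symm
end

section
/- (Gibbs variational principle.) Let H be a Hermitian n×n complex matrix. Then for every positive definite n×n density matrix Γ, Tr[HΓ] + Tr[Γ log Γ] ≥ −log Tr[exp(−H)], with equality if and only if Γ = exp(−H)/Tr[exp(−H)]. Here log Γ is defined by the functional calculus. -/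
open Matrix
open scoped ComplexOrder

/-- Matrix logarithm via the functional calculus. -/
noncomputable def matLog {n : ℕ} (M : Matrix (Fin n) (Fin n) ℂ) :
    Matrix (Fin n) (Fin n) ℂ :=
  matFun Real.log M

lemma klein_term {p q : ℝ} (hp : 0 < p) (hq : 0 < q) :
    0 ≤ p * Real.log p - p * Real.log q - p + q ∧
      (p * Real.log p - p * Real.log q - p + q = 0 ↔ p = q) := by
  have key : ∀ r : ℝ, 0 < r → p * Real.log p - p * Real.log r - p + r
      = r - p - p * Real.log (r / p) := by
    intro r hr
    rw [Real.log_div hr.ne' hp.ne']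
    ring
  constructor
  · have h := Real.log_le_sub_one_of_pos (div_pos hq hp)
    rw [key q hq]
    nlinarith [mul_le_mul_of_nonneg_left h hp.le, mul_div_cancel₀ q hp.ne']
  · constructor
    · intro h0
      by_contra hne
      have hqp : q / p ≠ 1 := by
        intro h1; exact hne ((div_eq_one_iff_eq hp.ne').mp h1).symm
      have h := Real.log_lt_sub_one_of_pos (div_pos hq hp) hqp
      rw [key q hq] at h0
      nlinarith [mul_lt_mul_of_pos_left h hp, mul_div_cancel₀ q hp.ne']
    · intro h; subst h; ring

lemma trace_conj_diag_mul {n : ℕ} (V U : Matrix (Fin n) (Fin n) ℂ) (a b : Fin n → ℂ) :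
    (V * Matrix.diagonal a * star V * (U * Matrix.diagonal b * star U)).trace
      = ∑ j, ∑ i, a j * b i * (Complex.normSq ((star V * U) j i) : ℂ) := by
  set W := star V * U with hW
  have e : V * Matrix.diagonal a * star V * (U * Matrix.diagonal b * star U)
      = V * (Matrix.diagonal a * (W * (Matrix.diagonal b * star U))) := by
    rw [hW]; simp only [Matrix.mul_assoc]
  have hsw : star U * V = star W := by rw [hW, StarMul.star_mul, star_star]
  have e2 : Matrix.diagonal a * (W * (Matrix.diagonal b * star U)) * V
      = Matrix.diagonal a * (W * (Matrix.diagonal b * star W)) := by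
    rw [← hsw]; simp only [Matrix.mul_assoc]
  rw [e, Matrix.trace_mul_comm, e2, Matrix.trace]
  refine Finset.sum_congr rfl fun j _ => ?_
  rw [Matrix.diag_apply, Matrix.diagonal_mul, Matrix.mul_apply, Finset.mul_sum]
  refine Finset.sum_congr rfl fun i _ => ?_
  rw [Matrix.diagonal_mul, Matrix.star_apply, Complex.star_def]
  rw [mul_comm (W j i), mul_assoc, mul_comm ((starRingEnd ℂ) (W j i)), Complex.mul_conj]
  ring

/-- **Gibbs variational principle.**  For a Hermitian matrix `H` and any positive definite
density matrix `Γ`, `Tr[HΓ] + Tr[Γ log Γ] ≥ -log Tr[exp(-H)]`, with equality if and only if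
`Γ = exp(-H)/Tr[exp(-H)]`. -/
theorem gibbs_variational_principle {n : ℕ}
    (H : Matrix (Fin n) (Fin n) ℂ) (hH : H.IsHermitian)
    (Γ : Matrix (Fin n) (Fin n) ℂ) (hΓ : Γ.PosDef) (hΓtr : Γ.trace = 1) :
    -(Complex.log ((NormedSpace.exp (-H)).trace)) ≤
        (H * Γ).trace + (Γ * matLog Γ).trace ∧
      ((H * Γ).trace + (Γ * matLog Γ).trace = -(Complex.log ((NormedSpace.exp (-H)).trace)) ↔
        Γ = ((NormedSpace.exp (-H)).trace)⁻¹ • NormedSpace.exp (-H)) := by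
  classical
  have hΓH : Γ.IsHermitian := hΓ.1
  -- eigendecomposition of Γ
  set U : Matrix (Fin n) (Fin n) ℂ := (hΓH.eigenvectorUnitary : Matrix (Fin n) (Fin n) ℂ)
    with hUdef
  set p : Fin n → ℝ := hΓH.eigenvalues with hpdef
  have hUmem : U ∈ Matrix.unitaryGroup (Fin n) ℂ := hΓH.eigenvectorUnitary.2
  have hUsU : star U * U = 1 := Matrix.mem_unitaryGroup_iff'.mp hUmem
  have hUUs : U * star U = 1 := Matrix.mem_unitaryGroup_iff.mp hUmem
  have hΓdec : Γ = U * Matrix.diagonal (fun i => (p i : ℂ)) * star U := by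
    have := hΓH.spectral_theorem
    rw [Unitary.conjStarAlgAut_apply] at this
    exact this
  have hppos : ∀ i, 0 < p i := fun i => hΓ.eigenvalues_pos i
  -- eigendecomposition of -H
  have hnH : (-H).IsHermitian := hH.neg
  set V : Matrix (Fin n) (Fin n) ℂ := (hnH.eigenvectorUnitary : Matrix (Fin n) (Fin n) ℂ)
    with hVdef
  set μ : Fin n → ℝ := hnH.eigenvalues with hμdef
  have hVmem : V ∈ Matrix.unitaryGroup (Fin n) ℂ := hnH.eigenvectorUnitary.2
  have hVsV : star V * V = 1 := Matrix.mem_unitaryGroup_iff'.mp hVmem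
  have hVVs : V * star V = 1 := Matrix.mem_unitaryGroup_iff.mp hVmem
  have hVinv : V⁻¹ = star V := Matrix.inv_eq_left_inv hVsV
  have hVunit : IsUnit V := ⟨⟨V, star V, hVVs, hVsV⟩, rfl⟩
  have hdec : (-H) = V * Matrix.diagonal (fun j => (μ j : ℂ)) * star V := by
    have := hnH.spectral_theorem
    rw [Unitary.conjStarAlgAut_apply] at this
    exact this
  have hHdec : H = V * Matrix.diagonal (fun j => ((-(μ j) : ℝ) : ℂ)) * star V := by
    have h1 : H = -(V * Matrix.diagonal (fun j => (μ j : ℂ)) * star V) := by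
      rw [← hdec, neg_neg]
    rw [h1]
    have h2 : Matrix.diagonal (fun j => ((-(μ j) : ℝ) : ℂ))
        = -Matrix.diagonal (fun j => (μ j : ℂ)) := by
      ext j k
      simp only [Matrix.diagonal_apply, Matrix.neg_apply]
      split_ifs <;> push_cast <;> ring
    rw [h2, Matrix.mul_neg, Matrix.neg_mul]
  have hexp : NormedSpace.exp (-H)
      = V * Matrix.diagonal (fun j => ((Real.exp (μ j) : ℝ) : ℂ)) * star V := by
    have hfun : NormedSpace.exp (fun j => ((μ j : ℝ) : ℂ))
        = fun j => ((Real.exp (μ j) : ℝ) : ℂ) := by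
      funext j
      rw [Pi.coe_exp, ← Complex.exp_eq_exp_ℂ, Complex.ofReal_exp]
    rw [hdec, ← hVinv, Matrix.exp_conj _ _ hVunit, Matrix.exp_diagonal, hfun, hVinv]
  set Z : ℝ := ∑ j, Real.exp (μ j) with hZdef
  have htr : (NormedSpace.exp (-H)).trace = (Z : ℂ) := by
    rw [hexp, Matrix.trace_mul_cycle, hVsV, Matrix.one_mul, Matrix.trace_diagonal, hZdef]
    norm_cast
  -- trace of Γ
  have hp1 : ∑ i, p i = 1 := by
    have h1 : Γ.trace = ((∑ i, p i : ℝ) : ℂ) := by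
      rw [hΓdec, Matrix.trace_mul_cycle, hUsU, Matrix.one_mul, Matrix.trace_diagonal]
      push_cast; ring
    rw [hΓtr] at h1
    exact_mod_cast h1.symm
  have hZpos : 0 < Z := by
    have hne : (Finset.univ : Finset (Fin n)).Nonempty := by
      by_contra h
      rw [Finset.not_nonempty_iff_eq_empty] at h
      rw [h, Finset.sum_empty] at hp1
      norm_num at hp1
    exact Finset.sum_pos (fun j _ => Real.exp_pos (μ j)) hne
  set q : Fin n → ℝ := fun j => Real.exp (μ j) / Z with hqdef
  have hqpos : ∀ j, 0 < q j := fun j => div_pos (Real.exp_pos _) hZpos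
  have hq1 : ∑ j, q j = 1 := by
    rw [hqdef, ← Finset.sum_div, ← hZdef, div_self hZpos.ne']
  have hlogq : ∀ j, Real.log (q j) = μ j - Real.log Z := by
    intro j
    rw [hqdef, Real.log_div (Real.exp_pos _).ne' hZpos.ne', Real.log_exp]
  -- the overlap matrix
  set W : Matrix (Fin n) (Fin n) ℂ := star V * U with hWdef
  set c : Fin n → Fin n → ℝ := fun j i => Complex.normSq (W j i) with hcdef
  have hcnn : ∀ j i, 0 ≤ c j i := fun j i => Complex.normSq_nonneg _
  have hWmem : W ∈ Matrix.unitaryGroup (Fin n) ℂ := mul_mem (Unitary.star_mem hVmem) hUmem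
  have hWsW : star W * W = 1 := Matrix.mem_unitaryGroup_iff'.mp hWmem
  have hWWs : W * star W = 1 := Matrix.mem_unitaryGroup_iff.mp hWmem
  have hrow : ∀ j, ∑ i, c j i = 1 := by
    intro j
    have h1 := congrArg (fun M => M j j) hWWs
    simp only [Matrix.mul_apply, Matrix.one_apply_eq, Matrix.star_apply, Complex.star_def] at h1
    have h2 : ∀ i, W j i * (starRingEnd ℂ) (W j i) = ((c j i : ℝ) : ℂ) := fun i =>
      Complex.mul_conj (W j i)
    rw [Finset.sum_congr rfl (fun i _ => h2 i)] at h1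
    exact_mod_cast h1
  have hcol : ∀ i, ∑ j, c j i = 1 := by
    intro i
    have h1 := congrArg (fun M => M i i) hWsW
    simp only [Matrix.mul_apply, Matrix.one_apply_eq, Matrix.star_apply, Complex.star_def] at h1
    have h2 : ∀ j, (starRingEnd ℂ) (W j i) * W j i = ((c j i : ℝ) : ℂ) := fun j => by
      rw [mul_comm]; exact Complex.mul_conj (W j i)
    rw [Finset.sum_congr rfl (fun j _ => h2 j)] at h1
    exact_mod_cast h1
  -- trace computations
  set TA : ℝ := ∑ j, ∑ i, (-(μ j)) * p i * c j i with hTAdef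
  set TB : ℝ := ∑ i, p i * Real.log (p i) with hTBdef
  have hTrH : (H * Γ).trace = ((TA : ℝ) : ℂ) := by
    rw [hHdec, hΓdec, trace_conj_diag_mul, hTAdef]
    push_cast
    rfl
  have hlogΓ : matLog Γ = U * Matrix.diagonal (fun i => ((Real.log (p i) : ℝ) : ℂ)) * star U := by
    unfold matLog matFun
    rw [dif_pos hΓH]
  have hTrB : (Γ * matLog Γ).trace = ((TB : ℝ) : ℂ) := by
    have hmul : Γ * matLog Γ
        = U * Matrix.diagonal (fun i => (p i : ℂ) * ((Real.log (p i) : ℝ) : ℂ)) * star U := by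
      rw [hlogΓ, hΓdec]
      calc U * Matrix.diagonal (fun i => (p i : ℂ)) * star U *
            (U * Matrix.diagonal (fun i => ((Real.log (p i) : ℝ) : ℂ)) * star U)
          = U * (Matrix.diagonal (fun i => (p i : ℂ)) * ((star U * U) *
              (Matrix.diagonal (fun i => ((Real.log (p i) : ℝ) : ℂ)) * star U))) := by
            simp only [Matrix.mul_assoc]
        _ = U * (Matrix.diagonal (fun i => (p i : ℂ)) *
              (Matrix.diagonal (fun i => ((Real.log (p i) : ℝ) : ℂ)) * star U)) := by
            rw [hUsU, Matrix.one_mul]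
        _ = U * (Matrix.diagonal (fun i => (p i : ℂ)) *
              Matrix.diagonal (fun i => ((Real.log (p i) : ℝ) : ℂ))) * star U := by
            simp only [Matrix.mul_assoc]
        _ = U * Matrix.diagonal (fun i => (p i : ℂ) * ((Real.log (p i) : ℝ) : ℂ)) * star U := by
            rw [Matrix.diagonal_mul_diagonal]
    rw [hmul, Matrix.trace_mul_cycle, hUsU, Matrix.one_mul, Matrix.trace_diagonal, hTBdef]
    push_cast; ring
  -- the relative-entropy sum
  set S : ℝ := ∑ j, ∑ i, c j i *
    (p i * Real.log (p i) - p i * Real.log (q j) - p i + q j) with hSdef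
  have hcp : ∑ j, ∑ i, c j i * p i = 1 := by
    rw [Finset.sum_comm]
    calc ∑ i, ∑ j, c j i * p i = ∑ i, (∑ j, c j i) * p i := by
          refine Finset.sum_congr rfl fun i _ => ?_; rw [Finset.sum_mul]
      _ = ∑ i, p i := by
          refine Finset.sum_congr rfl fun i _ => ?_; rw [hcol i, one_mul]
      _ = 1 := hp1
  have hA1 : ∑ j, ∑ i, c j i * (p i * Real.log (p i)) = TB := by
    rw [Finset.sum_comm, hTBdef]
    refine Finset.sum_congr rfl fun i _ => ?_
    rw [← Finset.sum_mul, hcol i, one_mul]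
  have hA2 : ∑ j, ∑ i, c j i * (p i * μ j) = -TA := by
    rw [hTAdef, ← Finset.sum_neg_distrib]
    refine Finset.sum_congr rfl fun j _ => ?_
    rw [← Finset.sum_neg_distrib]
    refine Finset.sum_congr rfl fun i _ => ?_
    ring
  have hA5 : ∑ j, ∑ i, c j i * q j = 1 := by
    calc ∑ j, ∑ i, c j i * q j = ∑ j, (∑ i, c j i) * q j := by
          refine Finset.sum_congr rfl fun j _ => ?_; rw [Finset.sum_mul]
      _ = ∑ j, q j := by
          refine Finset.sum_congr rfl fun j _ => ?_; rw [hrow j, one_mul]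
      _ = 1 := hq1
  have hSid : S = TA + TB + Real.log Z := by
    have hterm : ∀ j i, c j i * (p i * Real.log (p i) - p i * Real.log (q j) - p i + q j)
        = c j i * (p i * Real.log (p i)) - c j i * (p i * μ j)
          + Real.log Z * (c j i * p i) - c j i * p i + c j i * q j := by
      intro j i; rw [hlogq j]; ring
    rw [hSdef]
    simp only [hterm]
    simp only [Finset.sum_add_distrib, Finset.sum_sub_distrib, ← Finset.mul_sum]
    rw [hA1, hA2, hcp, hA5]
    ring
  have htermpos : ∀ j i, 0 ≤ c j i *
      (p i * Real.log (p i) - p i * Real.log (q j) - p i + q j) := fun j i =>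
    mul_nonneg (hcnn j i) (klein_term (hppos i) (hqpos j)).1
  have hSnn : 0 ≤ S := by
    rw [hSdef]
    exact Finset.sum_nonneg fun j _ => Finset.sum_nonneg fun i _ => htermpos j i
  -- equality condition as entrywise statement
  have hSzero_iff : S = 0 ↔ ∀ j i, W j i = 0 ∨ p i = q j := by
    rw [hSdef]
    rw [Finset.sum_eq_zero_iff_of_nonneg
      (fun j _ => Finset.sum_nonneg fun i _ => htermpos j i)]
    constructor
    · intro h j i
      have h2 := (Finset.sum_eq_zero_iff_of_nonneg (fun i _ => htermpos j i)).mp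
        (h j (Finset.mem_univ j)) i (Finset.mem_univ i)
      rcases mul_eq_zero.mp h2 with hc0 | hg0
      · left; exact Complex.normSq_eq_zero.mp hc0
      · right; exact ((klein_term (hppos i) (hqpos j)).2.mp hg0)
    · intro h j _
      refine Finset.sum_eq_zero fun i _ => ?_
      rcases h j i with h0 | h0
      · have : c j i = 0 := by rw [hcdef]; simp [h0]
        rw [this, zero_mul]
      · rw [h0]
        have := (klein_term (hqpos j) (hqpos j)).2.mpr rfl
        rw [this, mul_zero]
  -- the Gibbs state
  have hG : ((NormedSpace.exp (-H)).trace)⁻¹ • NormedSpace.exp (-H)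
      = V * Matrix.diagonal (fun j => ((q j : ℝ) : ℂ)) * star V := by
    rw [htr, hexp]
    have hdiag : ((Z : ℂ))⁻¹ • Matrix.diagonal (fun j => ((Real.exp (μ j) : ℝ) : ℂ))
        = Matrix.diagonal (fun j => ((q j : ℝ) : ℂ)) := by
      ext j k
      simp only [Matrix.smul_apply, Matrix.diagonal_apply, smul_eq_mul, hqdef]
      split_ifs
      · push_cast; ring
      · simp
    calc ((Z : ℂ))⁻¹ • (V * Matrix.diagonal (fun j => ((Real.exp (μ j) : ℝ) : ℂ)) * star V)
        = V * (((Z : ℂ))⁻¹ • Matrix.diagonal (fun j => ((Real.exp (μ j) : ℝ) : ℂ))) * star V := by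
          rw [Matrix.mul_smul, Matrix.smul_mul]
      _ = V * Matrix.diagonal (fun j => ((q j : ℝ) : ℂ)) * star V := by rw [hdiag]
  have hUVW : V * W = U := by
    rw [hWdef, ← Matrix.mul_assoc, hVVs, Matrix.one_mul]
  have hWsU : W * star U = star V := by
    rw [hWdef, Matrix.mul_assoc, hUUs, Matrix.mul_one]
  have hmatiff : (∀ j i, W j i = 0 ∨ p i = q j) ↔
      Γ = V * Matrix.diagonal (fun j => ((q j : ℝ) : ℂ)) * star V := by
    constructor
    · intro h
      have hWd : W * Matrix.diagonal (fun i => (p i : ℂ))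
          = Matrix.diagonal (fun j => ((q j : ℝ) : ℂ)) * W := by
        ext j i
        rw [Matrix.mul_diagonal, Matrix.diagonal_mul]
        rcases h j i with h0 | h0
        · rw [h0, zero_mul, mul_zero]
        · rw [h0, mul_comm]
      calc Γ = U * Matrix.diagonal (fun i => (p i : ℂ)) * star U := hΓdec
        _ = V * (W * Matrix.diagonal (fun i => (p i : ℂ))) * star U := by
            rw [← hUVW]; simp only [Matrix.mul_assoc]
        _ = V * (Matrix.diagonal (fun j => ((q j : ℝ) : ℂ)) * W) * star U := by rw [hWd]
        _ = V * Matrix.diagonal (fun j => ((q j : ℝ) : ℂ)) * (W * star U) := by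
            simp only [Matrix.mul_assoc]
        _ = V * Matrix.diagonal (fun j => ((q j : ℝ) : ℂ)) * star V := by rw [hWsU]
    · intro h j i
      have e1 : star V * Γ * U = W * Matrix.diagonal (fun i => (p i : ℂ)) := by
        rw [hΓdec]
        calc star V * (U * Matrix.diagonal (fun i => (p i : ℂ)) * star U) * U
            = star V * (U * (Matrix.diagonal (fun i => (p i : ℂ)) * (star U * U))) := by
              simp only [Matrix.mul_assoc]
          _ = star V * (U * Matrix.diagonal (fun i => (p i : ℂ))) := by
              rw [hUsU, Matrix.mul_one]
          _ = W * Matrix.diagonal (fun i => (p i : ℂ)) := by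
              rw [hWdef]; simp only [Matrix.mul_assoc]
      have e2 : star V * (V * Matrix.diagonal (fun j => ((q j : ℝ) : ℂ)) * star V) * U
          = Matrix.diagonal (fun j => ((q j : ℝ) : ℂ)) * W := by
        calc star V * (V * Matrix.diagonal (fun j => ((q j : ℝ) : ℂ)) * star V) * U
            = star V * V * (Matrix.diagonal (fun j => ((q j : ℝ) : ℂ)) * (star V * U)) := by
              simp only [Matrix.mul_assoc]
          _ = Matrix.diagonal (fun j => ((q j : ℝ) : ℂ)) * W := by
              rw [hVsV, Matrix.one_mul, hWdef]
      have hWd : W * Matrix.diagonal (fun i => (p i : ℂ))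
          = Matrix.diagonal (fun j => ((q j : ℝ) : ℂ)) * W := by
        rw [← e1, ← e2, h]
      have hent := congrArg (fun M => M j i) hWd
      simp only [Matrix.mul_diagonal, Matrix.diagonal_mul] at hent
      by_cases h0 : W j i = 0
      · exact Or.inl h0
      · right
        have : (p i : ℂ) = (q j : ℂ) := by
          have h1 : W j i * (p i : ℂ) = W j i * (q j : ℂ) := by
            rw [hent, mul_comm]
          exact mul_left_cancel₀ h0 h1
        exact_mod_cast this
  -- put everything together
  have hlogZ : Complex.log ((NormedSpace.exp (-H)).trace) = ((Real.log Z : ℝ) : ℂ) := by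
    rw [htr, Complex.ofReal_log hZpos.le]
  constructor
  · rw [hTrH, hTrB, hlogZ, ← Complex.ofReal_add, ← Complex.ofReal_neg,
      Complex.real_le_real]
    linarith [hSnn, hSid]
  · rw [hTrH, hTrB, hlogZ, ← Complex.ofReal_add, ← Complex.ofReal_neg,
      Complex.ofReal_inj, hG]
    constructor
    · intro h
      exact hmatiff.mp (hSzero_iff.mp (by linarith [hSid]))
    · intro h
      have : S = 0 := hSzero_iff.mpr (hmatiff.mpr h)
      linarith [hSid]
end

section
/- (Density of the 2D free Bose gas.) Fix κ > 0 and for T > 0 set N₀(T) := Σ_{k ∈ (2πℤ)²} 1/(e^{(|k|²+κ)/T} − 1), where |k|² = k₁² + k₂². Then N₀(T)/(T log T) → 1/(4π) as T → ∞. In particular the renormalized chemical potential λ ŵ(0) N₀ with λ = T^{−1} is proportional to log T in dimension 2. -/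
open Filter Real

lemma gauss_nat_summable {b : ℝ} (hb : 0 < b) :
    Summable (fun n : ℕ => Real.exp (-b * (n:ℝ)^2)) := by
  refine Summable.of_nonneg_of_le (fun n => (Real.exp_pos _).le) (fun n => ?_)
    (summable_geometric_of_lt_one (Real.exp_pos (-b)).le
      (Real.exp_lt_one_iff.2 (by linarith)))
  rw [← Real.exp_nat_mul]
  apply Real.exp_le_exp.2
  have h1 : (n:ℝ) ≤ (n:ℝ)^2 := by
    rcases Nat.eq_zero_or_pos n with h | h
    · simp [h]
    · have h1 : (1:ℝ) ≤ (n:ℝ) := by exact_mod_cast h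
      nlinarith
  nlinarith

lemma gauss_summable {b : ℝ} (hb : 0 < b) :
    Summable (fun j : ℤ => Real.exp (-b * (j:ℝ)^2)) := by
  refine Summable.of_nat_of_neg ?_ ?_ <;> simpa using gauss_nat_summable hb

lemma hasSum_exp_neg_geom {c : ℝ} (hc : 0 < c) :
    HasSum (fun n : ℕ => Real.exp (-((n:ℝ)+1)*c)) ((Real.exp c - 1)⁻¹) := by
  have h0 : (0:ℝ) ≤ Real.exp (-c) := (Real.exp_pos _).le
  have h1 : Real.exp (-c) < 1 := Real.exp_lt_one_iff.2 (by linarith)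
  have H := (hasSum_geometric_of_lt_one h0 h1).mul_left (Real.exp (-c))
  have he : Real.exp c - 1 ≠ 0 := by
    have := Real.add_one_le_exp c
    intro h
    nlinarith
  have hv : Real.exp (-c) * (1 - Real.exp (-c))⁻¹ = (Real.exp c - 1)⁻¹ := by
    have hec := Real.exp_pos c
    have hprod : Real.exp c * Real.exp (-c) = 1 := by
      rw [← Real.exp_add]; simp
    rw [eq_comm, inv_eq_iff_eq_inv, eq_comm, mul_inv, inv_inv]
    field_simp
    nlinarith [hprod]
  rw [hv] at H
  have hfun : (fun n : ℕ => Real.exp (-((n:ℝ)+1)*c))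
      = fun n : ℕ => Real.exp (-c) * Real.exp (-c) ^ n := by
    funext n
    rw [← Real.exp_nat_mul, ← Real.exp_add]
    congr 1
    ring
  rw [hfun]
  exact H

lemma hasSum_nplus1_geom {r : ℝ} (h0 : 0 ≤ r) (h1 : r < 1) :
    HasSum (fun n : ℕ => ((n:ℝ)+1) * r^(n+1)) (r / (1-r)^2) := by
  have H : HasSum (fun n : ℕ => (n:ℝ) * r^n) (r / (1-r)^2) := by
    apply hasSum_coe_mul_geometric_of_norm_lt_one
    rw [Real.norm_eq_abs, abs_lt]
    constructor <;> linarith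
  have H2 : HasSum (fun n : ℕ => ((n:ℕ):ℝ) * r^n)
      (r / (1-r)^2 + ∑ i ∈ Finset.range 1, (i:ℝ) * r ^ i) := by
    simpa using H
  have H3 : HasSum (fun n : ℕ => (((n+1:ℕ)):ℝ) * r^(n+1)) (r/(1-r)^2) :=
    (hasSum_nat_add_iff 1).2 H2
  have he : (fun n : ℕ => ((n:ℝ)+1)*r^(n+1)) = fun n : ℕ => (((n+1:ℕ)):ℝ) * r^(n+1) := by
    funext n
    push_cast
    ring
  rw [he]
  exact H3

lemma inv_exp_sub_one_le {c : ℝ} (hc : 0 < c) : (Real.exp c - 1)⁻¹ ≤ c⁻¹ := by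
  have h1 : c ≤ Real.exp c - 1 := by linarith [Real.add_one_le_exp c]
  exact inv_anti₀ hc h1

lemma gauss_poisson {b : ℝ} (hb : 0 < b) :
    (∑' j : ℤ, Real.exp (-b * (j:ℝ)^2))
      = Real.sqrt (π/b) * ∑' j : ℤ, Real.exp (-(π^2/b) * (j:ℝ)^2) := by
  have ha : 0 < b / π := div_pos hb Real.pi_pos
  have H := Real.tsum_exp_neg_mul_int_sq ha
  have e1 : -π * (b/π) = -b := by field_simp
  have e2 : -π / (b/π) = -(π^2/b) := by
    rw [div_div_eq_mul_div, neg_mul, neg_div, sq]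
  have e3 : (1:ℝ) / (b/π) ^ ((1:ℝ)/2) = Real.sqrt (π/b) := by
    rw [← Real.sqrt_eq_rpow, one_div, ← Real.sqrt_inv, inv_div]
  rw [e1, e2, e3] at H
  exact H

lemma gauss_center_lower {c : ℝ} (hc : 0 < c) :
    1 ≤ (∑' j : ℤ, Real.exp (-c * (j:ℝ)^2)) := by
  have h0 := Summable.le_tsum (gauss_summable hc) (0:ℤ) (fun j _ => (Real.exp_pos _).le)
  simpa using h0

lemma gauss_center_upper {c : ℝ} (hc : 0 < c) :
    (∑' j : ℤ, Real.exp (-c * (j:ℝ)^2)) ≤ 1 + 2 * c⁻¹ := by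
  have hnat := gauss_nat_summable hc
  set f : ℤ → ℝ := fun j : ℤ => Real.exp (-c * (j:ℝ)^2) with hf
  have hnat' : Summable (fun n : ℕ => f n) := by simp only [hf]; simpa using hnat
  have hneg : Summable (fun n : ℕ => f (-n)) := by simp only [hf]; simpa using hnat
  have hsplit := Summable.tsum_of_nat_of_neg hnat' hneg
  have hnn : (∑' n : ℕ, f (-n)) = ∑' n : ℕ, f n := by
    congr 1
    funext n
    simp only [hf]
    norm_num
  have htail : (∑' n : ℕ, f n) = 1 + ∑' n : ℕ, f (n+1) := by
    rw [Summable.tsum_eq_zero_add hnat']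
    congr 1
    · simp [hf]
  have hbd : (∑' n : ℕ, f (n+1)) ≤ (Real.exp c - 1)⁻¹ := by
    rw [← (hasSum_exp_neg_geom hc).tsum_eq]
    refine Summable.tsum_le_tsum (fun n => ?_) ?_ (hasSum_exp_neg_geom hc).summable
    · simp only [hf]
      apply Real.exp_le_exp.2
      have h0 : (0:ℝ) ≤ (n:ℝ) := Nat.cast_nonneg n
      push_cast
      nlinarith [mul_nonneg hc.le (mul_nonneg h0 (by linarith : (0:ℝ) ≤ (n:ℝ)+1))]
    · refine Summable.of_nonneg_of_le (fun n => (Real.exp_pos _).le) (fun n => ?_)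
        (hasSum_exp_neg_geom hc).summable
      simp only [hf]
      apply Real.exp_le_exp.2
      have h0 : (0:ℝ) ≤ (n:ℝ) := Nat.cast_nonneg n
      push_cast
      nlinarith [mul_nonneg hc.le (mul_nonneg h0 (by linarith : (0:ℝ) ≤ (n:ℝ)+1))]
  have hinv := inv_exp_sub_one_le hc
  have h00 : f 0 = 1 := by simp [hf]
  rw [hsplit, hnn, h00, htail]
  linarith

lemma theta_sq_lower {b : ℝ} (hb : 0 < b) :
    π/b ≤ (∑' j : ℤ, Real.exp (-b * (j:ℝ)^2))^2 := by
  have hc : 0 < π^2/b := by positivity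
  have h1 := gauss_center_lower hc
  have hpb : (0:ℝ) ≤ π/b := le_of_lt (div_pos Real.pi_pos hb)
  rw [gauss_poisson hb, mul_pow, Real.sq_sqrt hpb]
  have hS2 : 1 ≤ (∑' j : ℤ, Real.exp (-(π^2/b) * (j:ℝ)^2))^2 := by nlinarith
  calc π/b = (π/b) * 1 := (mul_one _).symm
    _ ≤ (π/b) * (∑' j : ℤ, Real.exp (-(π^2/b) * (j:ℝ)^2))^2 :=
        mul_le_mul_of_nonneg_left hS2 hpb

lemma theta_sq_upper {b : ℝ} (hb : 0 < b) :
    (∑' j : ℤ, Real.exp (-b * (j:ℝ)^2))^2 ≤ π/b + 2 + b := by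
  have hc : 0 < π^2/b := by positivity
  have hup := gauss_center_upper hc
  have hS0 : (0:ℝ) ≤ ∑' j : ℤ, Real.exp (-(π^2/b) * (j:ℝ)^2) :=
    tsum_nonneg fun j => (Real.exp_pos _).le
  have hpb : (0:ℝ) ≤ π/b := le_of_lt (div_pos Real.pi_pos hb)
  rw [gauss_poisson hb, mul_pow, Real.sq_sqrt hpb]
  have h2 : (∑' j : ℤ, Real.exp (-(π^2/b) * (j:ℝ)^2))^2 ≤ (1 + 2*(π^2/b)⁻¹)^2 :=
    pow_le_pow_left₀ hS0 hup 2
  have hkey : (π/b)*(1 + 2*(π^2/b)⁻¹)^2 ≤ π/b + 2 + b := by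
    have h3 : (π/b)*(1 + 2*(π^2/b)⁻¹)^2 = π/b + 4/π + (4/π^3)*b := by
      field_simp
      ring
    have hπ3 : (3:ℝ) ≤ π := by linarith [Real.pi_gt_three]
    have h4 : 4/π ≤ 2 := by
      rw [div_le_iff₀ (by linarith)]
      linarith
    have h5 : (4/π^3)*b ≤ b := by
      have h6 : 4/π^3 ≤ 1 := by
        rw [div_le_one (by positivity)]
        nlinarith
      nlinarith
    rw [h3]
    linarith
  calc (π/b) * (∑' j : ℤ, Real.exp (-(π^2/b) * (j:ℝ)^2))^2
      ≤ (π/b)*(1 + 2*(π^2/b)⁻¹)^2 := mul_le_mul_of_nonneg_left h2 hpb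
    _ ≤ π/b + 2 + b := hkey

lemma geom_sq_bound {κ T : ℝ} (hκ : 0 < κ) (hT : 3 ≤ T) :
    Real.exp (-(κ/T)) / (1 - Real.exp (-(κ/T)))^2 ≤ Real.exp κ * T^2 / κ^2 := by
  have hT0 : (0:ℝ) < T := by linarith
  set u : ℝ := κ/T with hu_def
  have hu : 0 < u := div_pos hκ hT0
  have hu1 : u ≤ κ := by
    rw [hu_def]
    exact div_le_self hκ.le (by linarith)
  set r : ℝ := Real.exp (-u) with hr_def
  have hr0 : 0 < r := Real.exp_pos _
  have hr1 : r < 1 := Real.exp_lt_one_iff.2 (by linarith)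
  have hprod : Real.exp u * r = 1 := by
    rw [hr_def, ← Real.exp_add]; simp
  have key : u * r ≤ 1 - r := by
    have h := Real.add_one_le_exp u
    nlinarith [mul_le_mul_of_nonneg_right h hr0.le]
  have hpos : 0 < u * r := mul_pos hu hr0
  have h2 : (u*r)^2 ≤ (1-r)^2 := pow_le_pow_left₀ hpos.le key 2
  have h3 : r/(1-r)^2 ≤ r/(u*r)^2 :=
    div_le_div_of_nonneg_left hr0.le (pow_pos hpos 2) h2
  have h4 : r/(u*r)^2 = (1/u^2) * Real.exp u := by
    have : Real.exp u = 1/r := by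
      field_simp
      linarith [hprod]
    rw [this]
    field_simp
  have h5 : Real.exp u ≤ Real.exp κ := Real.exp_le_exp.2 hu1
  have h6 : (1:ℝ)/u^2 = T^2/κ^2 := by
    rw [hu_def]
    field_simp
  have h7 : (1/u^2) * Real.exp u ≤ (T^2/κ^2) * Real.exp κ := by
    rw [h6]
    apply mul_le_mul_of_nonneg_left h5 (by positivity)
  calc r/(1-r)^2 ≤ r/(u*r)^2 := h3
    _ = (1/u^2) * Real.exp u := h4
    _ ≤ (T^2/κ^2) * Real.exp κ := h7
    _ = Real.exp κ * T^2 / κ^2 := by ring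

set_option maxHeartbeats 1000000 in
lemma bose_sandwich {κ T : ℝ} (hκ : 0 < κ) (hT : 3 ≤ T) :
    (T/(4*π)) * (-Real.log (1 - Real.exp (-(κ/T)))) ≤
      (∑' k : ℤ × ℤ, (Real.exp ((((2*π*(k.1:ℝ))^2 + (2*π*(k.2:ℝ))^2) + κ)/T) - 1)⁻¹)
    ∧ (∑' k : ℤ × ℤ, (Real.exp ((((2*π*(k.1:ℝ))^2 + (2*π*(k.2:ℝ))^2) + κ)/T) - 1)⁻¹)
      ≤ (T/(4*π)) * (-Real.log (1 - Real.exp (-(κ/T))))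
        + (2/κ + 4*π^2*Real.exp κ/κ^2) * T := by
  have hT0 : (0:ℝ) < T := by linarith
  have hpi := Real.pi_pos
  have hb0 : (0:ℝ) < 4*π^2/T := by positivity
  -- basic quantities
  set q : ℤ × ℤ → ℝ := fun k => (2*π*(k.1:ℝ))^2 + (2*π*(k.2:ℝ))^2 with hq_def
  have hq0 : ∀ k, 0 ≤ q k := fun k => by positivity
  set r : ℝ := Real.exp (-(κ/T)) with hr_def
  have hr0 : 0 < r := Real.exp_pos _
  have hr1 : r < 1 := Real.exp_lt_one_iff.2 (by positivity |> neg_neg_iff_pos.2)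
  -- the summand as a geometric series
  set H : (ℤ × ℤ) × ℕ → ℝ := fun p => Real.exp (-((p.2:ℝ)+1) * ((q p.1 + κ)/T)) with hH_def
  have hx0 : ∀ k, 0 < (q k + κ)/T := fun k => div_pos (by linarith [hq0 k]) hT0
  have hgeom : ∀ k : ℤ × ℤ, HasSum (fun n : ℕ => H (k, n))
      ((Real.exp ((q k + κ)/T) - 1)⁻¹) := by
    intro k
    simp only [hH_def]
    exact hasSum_exp_neg_geom (hx0 k)
  -- summability of the double series
  have hA : Summable (fun k : ℤ × ℤ => Real.exp (-(q k)/T)) := by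
    have h2 := Summable.mul_of_nonneg (gauss_summable hb0) (gauss_summable hb0)
      (fun j => (Real.exp_pos _).le) (fun j => (Real.exp_pos _).le)
    refine h2.congr fun k => ?_
    rw [← Real.exp_add]
    congr 1
    simp only [hq_def]
    field_simp
    ring
  have hB : Summable (fun n : ℕ => Real.exp (-((n:ℝ)+1) * (κ/T))) :=
    (hasSum_exp_neg_geom (div_pos hκ hT0)).summable
  have hHsum : Summable H := by
    refine Summable.of_nonneg_of_le (fun p => (Real.exp_pos _).le) (fun p => ?_)
      (Summable.mul_of_nonneg hA hB (fun k => (Real.exp_pos _).le)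
        (fun n => (Real.exp_pos _).le))
    rw [← Real.exp_add]
    apply Real.exp_le_exp.2
    have h1 : q p.1 ≤ ((p.2:ℝ)+1) * q p.1 := by
      nlinarith [hq0 p.1, Nat.cast_nonneg (α := ℝ) p.2]
    have h2 : (-(q p.1)/T + -((p.2:ℝ)+1)*(κ/T)) - (-((p.2:ℝ)+1) * ((q p.1 + κ)/T))
        = (((p.2:ℝ)+1) * q p.1 - q p.1)/T := by field_simp; ring
    have h3 : 0 ≤ (((p.2:ℝ)+1) * q p.1 - q p.1)/T := div_nonneg (by linarith) hT0.le
    linarith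
  have hHsum' : Summable (fun p : (ℤ × ℤ) × ℕ => H (p.1, p.2)) := hHsum
  -- rewrite the sum as an iterated sum, and swap
  have hstep1 : (∑' k : ℤ × ℤ, (Real.exp ((q k + κ)/T) - 1)⁻¹)
      = ∑' (k : ℤ × ℤ), ∑' (n : ℕ), H (k, n) :=
    tsum_congr fun k => (hgeom k).tsum_eq.symm
  have hswap : (∑' (k : ℤ × ℤ), ∑' (n : ℕ), H (k, n))
      = ∑' (n : ℕ), ∑' (k : ℤ × ℤ), H (k, n) :=
    (Summable.tsum_comm (f := fun (k : ℤ × ℤ) (n : ℕ) => H (k, n)) hHsum').symm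
  -- factor the inner sum
  set G : ℕ → ℝ := fun n => ∑' j : ℤ, Real.exp (-(4*π^2*((n:ℝ)+1)/T) * (j:ℝ)^2) with hG_def
  set E : ℕ → ℝ := fun n => Real.exp (-((n:ℝ)+1) * (κ/T)) with hE_def
  have hcn : ∀ n : ℕ, (0:ℝ) < 4*π^2*((n:ℝ)+1)/T := fun n => by positivity
  have hE_r : ∀ n : ℕ, E n = r^(n+1) := by
    intro n
    simp only [hE_def, hr_def]
    rw [← Real.exp_nat_mul]
    congr 1
    push_cast
    ring
  have hinner : ∀ n : ℕ, (∑' k : ℤ × ℤ, H (k, n)) = (G n)^2 * E n := by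
    intro n
    have hAs := gauss_summable (hcn n)
    have hs := Summable.mul_of_nonneg hAs hAs
      (fun j => (Real.exp_pos _).le) (fun j => (Real.exp_pos _).le)
    have hsplit : ∀ k : ℤ × ℤ, H (k, n)
        = (Real.exp (-(4*π^2*((n:ℝ)+1)/T) * (k.1:ℝ)^2)
            * Real.exp (-(4*π^2*((n:ℝ)+1)/T) * (k.2:ℝ)^2)) * E n := by
      intro k
      simp only [hH_def, hE_def, hq_def, ← Real.exp_add]
      congr 1
      field_simp
      ring
    calc (∑' k : ℤ × ℤ, H (k, n))
        = ∑' k : ℤ × ℤ, (Real.exp (-(4*π^2*((n:ℝ)+1)/T) * (k.1:ℝ)^2)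
            * Real.exp (-(4*π^2*((n:ℝ)+1)/T) * (k.2:ℝ)^2)) * E n := tsum_congr hsplit
      _ = (∑' k : ℤ × ℤ, Real.exp (-(4*π^2*((n:ℝ)+1)/T) * (k.1:ℝ)^2)
            * Real.exp (-(4*π^2*((n:ℝ)+1)/T) * (k.2:ℝ)^2)) * E n := tsum_mul_right
      _ = (∑' (b : ℤ), ∑' (c : ℤ), Real.exp (-(4*π^2*((n:ℝ)+1)/T) * (b:ℝ)^2)
            * Real.exp (-(4*π^2*((n:ℝ)+1)/T) * (c:ℝ)^2)) * E n := by rw [Summable.tsum_prod hs]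
      _ = (∑' (b : ℤ), Real.exp (-(4*π^2*((n:ℝ)+1)/T) * (b:ℝ)^2) * G n) * E n := by
            rw [tsum_congr fun b => tsum_mul_left]
      _ = (G n * G n) * E n := by rw [tsum_mul_right]
      _ = (G n)^2 * E n := by ring
  have hmid : Summable (fun n : ℕ => (G n)^2 * E n) := by
    have h1 : Summable (fun n : ℕ => ∑' k : ℤ × ℤ, H (k, n)) := hHsum'.prod_symm.prod
    exact h1.congr hinner
  -- lower bound series
  have habs : |r| < 1 := abs_lt.2 ⟨by linarith, hr1⟩
  have hlow : HasSum (fun n : ℕ => (T/(4*π)) * (r^(n+1)/((n:ℝ)+1)))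
      ((T/(4*π)) * (-Real.log (1 - r))) :=
    (hasSum_pow_div_log_of_abs_lt_one habs).mul_left _
  have hrpow : ∀ n : ℕ, (0:ℝ) ≤ r^(n+1) := fun n => pow_nonneg hr0.le _
  have hlow_le : ∀ n : ℕ, (T/(4*π)) * (r^(n+1)/((n:ℝ)+1)) ≤ (G n)^2 * E n := by
    intro n
    have hone : (0:ℝ) < (n:ℝ)+1 := by positivity
    have heq : (T/(4*π)) * (r^(n+1)/((n:ℝ)+1)) = (π/(4*π^2*((n:ℝ)+1)/T)) * r^(n+1) := by
      field_simp
    rw [heq, hE_r n]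
    exact mul_le_mul_of_nonneg_right (theta_sq_lower (hcn n)) (hrpow n)
  -- upper bound series
  have hS2 : HasSum (fun n : ℕ => r^(n+1)) ((Real.exp (κ/T) - 1)⁻¹) := by
    have h := hasSum_exp_neg_geom (div_pos hκ hT0)
    have he : (fun n : ℕ => r^(n+1)) = fun n : ℕ => Real.exp (-((n:ℝ)+1)*(κ/T)) := by
      funext n
      rw [← hE_r n]
    rw [he]
    exact h
  have hS2' := hS2.mul_left 2
  have hS3 : HasSum (fun n : ℕ => (4*π^2/T) * (((n:ℝ)+1) * r^(n+1)))
      ((4*π^2/T) * (r/(1-r)^2)) := (hasSum_nplus1_geom hr0.le hr1).mul_left _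
  have hupS := hlow.add (hS2'.add hS3)
  have hup_le : ∀ n : ℕ, (G n)^2 * E n ≤ (T/(4*π)) * (r^(n+1)/((n:ℝ)+1))
      + (2 * r^(n+1) + (4*π^2/T) * (((n:ℝ)+1) * r^(n+1))) := by
    intro n
    have h1 := mul_le_mul_of_nonneg_right (theta_sq_upper (hcn n)) (hrpow n)
    have heq : (π/(4*π^2*((n:ℝ)+1)/T) + 2 + 4*π^2*((n:ℝ)+1)/T) * r^(n+1)
        = (T/(4*π)) * (r^(n+1)/((n:ℝ)+1))
          + (2 * r^(n+1) + (4*π^2/T) * (((n:ℝ)+1) * r^(n+1))) := by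
      have hone : (0:ℝ) < (n:ℝ)+1 := by positivity
      field_simp
      ring
    rw [hE_r n]
    calc (G n)^2 * r^(n+1)
        ≤ (π/(4*π^2*((n:ℝ)+1)/T) + 2 + 4*π^2*((n:ℝ)+1)/T) * r^(n+1) := h1
      _ = _ := heq
  have hmain : (∑' k : ℤ × ℤ, (Real.exp ((q k + κ)/T) - 1)⁻¹)
      = ∑' n : ℕ, (G n)^2 * E n := by
    rw [hstep1, hswap]
    exact tsum_congr hinner
  constructor
  · rw [hmain]
    calc (T/(4*π)) * (-Real.log (1 - r))
        = ∑' n : ℕ, (T/(4*π)) * (r^(n+1)/((n:ℝ)+1)) := hlow.tsum_eq.symm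
      _ ≤ ∑' n : ℕ, (G n)^2 * E n := Summable.tsum_le_tsum hlow_le hlow.summable hmid
  · rw [hmain]
    have h1 : (∑' n : ℕ, (G n)^2 * E n) ≤ (T/(4*π)) * (-Real.log (1 - r))
        + (2 * (Real.exp (κ/T) - 1)⁻¹ + (4*π^2/T) * (r/(1-r)^2)) := by
      calc (∑' n : ℕ, (G n)^2 * E n)
          ≤ ∑' n : ℕ, ((T/(4*π)) * (r^(n+1)/((n:ℝ)+1))
              + (2 * r^(n+1) + (4*π^2/T) * (((n:ℝ)+1) * r^(n+1)))) :=
            Summable.tsum_le_tsum hup_le hmid hupS.summable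
        _ = _ := hupS.tsum_eq
    have h2 : 2 * (Real.exp (κ/T) - 1)⁻¹ ≤ (2/κ) * T := by
      have h7 := inv_exp_sub_one_le (div_pos hκ hT0)
      have hinv : ((κ/T):ℝ)⁻¹ = T/κ := by
        field_simp
      rw [hinv] at h7
      have h4 : (2/κ) * T = 2 * (T/κ) := by ring
      rw [h4]
      linarith
    have h3 : (4*π^2/T) * (r/(1-r)^2) ≤ (4*π^2*Real.exp κ/κ^2) * T := by
      have hg := geom_sq_bound hκ hT
      have h5 : (4*π^2/T) * (Real.exp κ * T^2/κ^2) = (4*π^2*Real.exp κ/κ^2) * T := by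
        field_simp
      have h6 : (0:ℝ) ≤ 4*π^2/T := by positivity
      calc (4*π^2/T) * (r/(1-r)^2)
          ≤ (4*π^2/T) * (Real.exp κ * T^2/κ^2) := mul_le_mul_of_nonneg_left hg h6
        _ = _ := h5
    have hCT : (2/κ + 4*π^2*Real.exp κ/κ^2) * T
        = (2/κ)*T + (4*π^2*Real.exp κ/κ^2)*T := by ring
    rw [hCT]
    linarith

/-- **Density of the 2D free Bose gas.**  With `N₀(T) = Σ_{k ∈ (2πℤ)²} (e^{(|k|²+κ)/T} - 1)⁻¹`,
one has `N₀(T)/(T log T) → 1/(4π)` as `T → ∞`; in particular the renormalized chemical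
potential `T⁻¹ ŵ(0) N₀` is proportional to `log T` in dimension 2. -/
theorem free_bose_gas_density_2D (κ : ℝ) (hκ : 0 < κ) (N₀ : ℝ → ℝ)
    (hN₀ : ∀ T : ℝ, N₀ T =
      ∑' k : ℤ × ℤ,
        (Real.exp ((((2 * π * k.1) ^ 2 + (2 * π * k.2) ^ 2) + κ) / T) - 1)⁻¹) :
    Tendsto (fun T : ℝ => N₀ T / (T * Real.log T)) atTop (nhds (1 / (4 * π))) := by
  have hpi := Real.pi_pos
  set C : ℝ := 2/κ + 4*π^2*Real.exp κ/κ^2 with hC_def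
  set Lf : ℝ → ℝ := fun T => -Real.log (1 - Real.exp (-(κ/T))) with hLf_def
  -- limit (1 - exp(-u))/u → 1 as u → 0
  have hslope : Tendsto (fun u : ℝ => (1 - Real.exp (-u))/u) (nhdsWithin 0 {(0:ℝ)}ᶜ) (nhds 1) := by
    have hd : HasDerivAt (fun u : ℝ => 1 - Real.exp (-u)) 1 0 := by
      have h1 : HasDerivAt (fun u : ℝ => -u) (-1) 0 := by
        exact (hasDerivAt_id' (0:ℝ)).neg
      have h2 : HasDerivAt (fun u : ℝ => Real.exp (-u)) (-1) 0 := by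
        have h3 := (Real.hasDerivAt_exp (-0)).comp 0 h1
        exact h3.congr_deriv (by simp)
      exact ((hasDerivAt_const (0:ℝ) (1:ℝ)).sub h2).congr_deriv (by norm_num)
    have h4 := hasDerivAt_iff_tendsto_slope.mp hd
    refine h4.congr fun u => ?_
    rw [slope_def_field]
    simp
  have hku : Tendsto (fun T : ℝ => κ/T) atTop (nhdsWithin 0 {(0:ℝ)}ᶜ) := by
    rw [tendsto_nhdsWithin_iff]
    constructor
    · exact tendsto_const_nhds.div_atTop tendsto_id
    · filter_upwards [eventually_gt_atTop 0] with T hT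
      exact (div_pos hκ hT).ne'
  have hcomp := hslope.comp hku
  have hTu : Tendsto (fun T : ℝ => T * (1 - Real.exp (-(κ/T)))) atTop (nhds κ) := by
    have h5 := hcomp.const_mul κ
    rw [mul_one] at h5
    refine Tendsto.congr' ?_ h5
    filter_upwards [eventually_gt_atTop 0] with T hT
    have hT0 : T ≠ 0 := hT.ne'
    have hκT : κ/T ≠ 0 := (div_pos hκ hT).ne'
    show κ * ((1 - Real.exp (-(κ/T)))/(κ/T)) = T * (1 - Real.exp (-(κ/T)))
    field_simp
  have hlogTu : Tendsto (fun T : ℝ => Real.log (T * (1 - Real.exp (-(κ/T))))) atTop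
      (nhds (Real.log κ)) := ((Real.continuousAt_log hκ.ne').tendsto).comp hTu
  have hinvlog : Tendsto (fun T : ℝ => (Real.log T)⁻¹) atTop (nhds 0) :=
    Real.tendsto_log_atTop.inv_tendsto_atTop
  have hL : Tendsto (fun T : ℝ => Lf T / Real.log T) atTop (nhds 1) := by
    have h6 : Tendsto
        (fun T : ℝ => 1 - Real.log (T * (1 - Real.exp (-(κ/T)))) * (Real.log T)⁻¹) atTop
        (nhds (1 - Real.log κ * 0)) := tendsto_const_nhds.sub (hlogTu.mul hinvlog)
    rw [mul_zero, sub_zero] at h6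
    refine Tendsto.congr' ?_ h6
    filter_upwards [eventually_ge_atTop 3] with T hT
    have hT0 : (0:ℝ) < T := by linarith
    have hlogT : 0 < Real.log T := Real.log_pos (by linarith)
    have he1 : Real.exp (-(κ/T)) < 1 := by
      apply Real.exp_lt_one_iff.2
      have : 0 < κ/T := div_pos hκ hT0
      linarith
    have hu0 : 0 < 1 - Real.exp (-(κ/T)) := by linarith
    have hlmul : Real.log (T * (1 - Real.exp (-(κ/T))))
        = Real.log T + Real.log (1 - Real.exp (-(κ/T))) := Real.log_mul hT0.ne' hu0.ne'
    simp only [hLf_def]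
    rw [hlmul]
    field_simp
    ring
  -- squeeze
  have hlo : Tendsto (fun T : ℝ => (1/(4*π)) * (Lf T / Real.log T)) atTop
      (nhds (1/(4*π))) := by
    have := hL.const_mul (1/(4*π))
    rwa [mul_one] at this
  have hhi : Tendsto (fun T : ℝ => (1/(4*π)) * (Lf T / Real.log T) + C * (Real.log T)⁻¹)
      atTop (nhds (1/(4*π))) := by
    have h7 := hlo.add (hinvlog.const_mul C)
    rwa [mul_zero, add_zero] at h7
  refine tendsto_of_tendsto_of_tendsto_of_le_of_le' hlo hhi ?_ ?_
  · filter_upwards [eventually_ge_atTop 3] with T hT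
    have hT0 : (0:ℝ) < T := by linarith
    have hlogT : 0 < Real.log T := Real.log_pos (by linarith)
    have hs := (bose_sandwich hκ hT).1
    rw [hN₀ T]
    have hpos : 0 < T * Real.log T := mul_pos hT0 hlogT
    have h8 := div_le_div_of_nonneg_right hs hpos.le
    have h9 : ((T/(4*π)) * Lf T)/(T * Real.log T) = (1/(4*π)) * (Lf T / Real.log T) := by
      field_simp
    rw [← h9]
    exact h8
  · filter_upwards [eventually_ge_atTop 3] with T hT
    have hT0 : (0:ℝ) < T := by linarith
    have hlogT : 0 < Real.log T := Real.log_pos (by linarith)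
    have hs := (bose_sandwich hκ hT).2
    rw [hN₀ T]
    have hpos : 0 < T * Real.log T := mul_pos hT0 hlogT
    have h8 := div_le_div_of_nonneg_right hs hpos.le
    have h9 : ((T/(4*π)) * Lf T + C * T)/(T * Real.log T)
        = (1/(4*π)) * (Lf T / Real.log T) + C * (Real.log T)⁻¹ := by
      field_simp
    rw [← h9]
    exact h8
end

section
/- (Duhamel formula for the matrix exponential.) Let A and B be arbitrary n×n complex matrices. Then the map t ↦ exp(A + tB) is differentiable at t = 0 with derivative ∫₀¹ exp(sA) B exp((1−s)A) ds (a Bochner integral of a continuous matrix-valued function). -/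
open Matrix MeasureTheory NormedSpace

attribute [local instance] Matrix.frobeniusNormedAddCommGroup Matrix.frobeniusNormedSpace
attribute [local instance] Matrix.frobeniusNormedRing Matrix.frobeniusNormedAlgebra

lemma duhamel_aux {n : ℕ} (X Y : Matrix (Fin n) (Fin n) ℂ) :
    exp X - exp Y
      = ∫ s in (0:ℝ)..1, exp (s • X) * (X - Y) * exp ((1 - s) • Y) := by
  have hder : ∀ s : ℝ, HasDerivAt (fun u : ℝ => exp (u • X) * exp ((1 - u) • Y))
      (exp (s • X) * (X - Y) * exp ((1 - s) • Y)) s := by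
    intro s
    have h1 : HasDerivAt (fun u : ℝ => exp (u • X)) (exp (s • X) * X) s := by
      exact hasDerivAt_exp_smul_const X s
    have h2' : HasDerivAt (fun u : ℝ => exp (u • Y)) (Y * exp ((1 - s) • Y)) (1 - s) := by
      exact hasDerivAt_exp_smul_const' Y (1 - s)
    have hlin : HasDerivAt (fun u : ℝ => 1 - u) (-1) s := by
      simpa using (hasDerivAt_id s).const_sub 1
    have h2 : HasDerivAt (fun u : ℝ => exp ((1 - u) • Y))
        (-(Y * exp ((1 - s) • Y))) s := by
      have h3 := h2'.scomp s hlin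
      simp only [Function.comp_def, neg_smul, one_smul] at h3
      exact h3
    have := h1.mul h2
    exact this.congr_deriv (by noncomm_ring)
  have hcont : Continuous fun s : ℝ => exp (s • X) * (X - Y) * exp ((1 - s) • Y) := by
    have he : Continuous (exp : Matrix (Fin n) (Fin n) ℂ → _) := exp_continuous
    fun_prop
  have := intervalIntegral.integral_eq_sub_of_hasDerivAt
    (f := fun u : ℝ => exp (u • X) * exp ((1 - u) • Y))
    (fun s _ => hder s) (hcont.intervalIntegrable 0 1)
  rw [this]
  simp [exp_zero]

/-- **Duhamel formula for the matrix exponential.**  For arbitrary `n×n` complex matrices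
`A, B`, the map `t ↦ exp(A + tB)` is differentiable at `t = 0` with derivative
`∫₀¹ exp(sA) B exp((1-s)A) ds`. -/
theorem duhamel_formula {n : ℕ} (A B : Matrix (Fin n) (Fin n) ℂ) :
    HasDerivAt (fun t : ℝ => NormedSpace.exp (A + (t : ℂ) • B))
      (∫ s in (0:ℝ)..1,
        NormedSpace.exp ((s : ℂ) • A) * B * NormedSpace.exp ((1 - (s : ℂ)) • A)) 0 := by
  have hf : Continuous (Function.uncurry fun (t s : ℝ) =>
      exp (s • (A + (t : ℂ) • B)) * B * exp ((1 - s) • A)) := by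
    have he : Continuous (exp : Matrix (Fin n) (Fin n) ℂ → _) := exp_continuous
    unfold Function.uncurry
    fun_prop
  have hGcont : Continuous fun t : ℝ =>
      ∫ s in (0:ℝ)..1, exp (s • (A + (t : ℂ) • B)) * B * exp ((1 - s) • A) :=
    intervalIntegral.continuous_parametric_intervalIntegral_of_continuous' hf 0 1
  have hG0 : (∫ s in (0:ℝ)..1,
        exp ((s : ℂ) • A) * B * exp ((1 - (s : ℂ)) • A))
      = ∫ s in (0:ℝ)..1, exp (s • (A + ((0:ℝ) : ℂ) • B)) * B * exp ((1 - s) • A) := by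
    apply intervalIntegral.integral_congr
    intro s _
    dsimp only
    have h1 : ((s : ℂ)) • A = s • A := by norm_cast
    have h2 : ((1 : ℂ) - (s : ℂ)) • A = (1 - s) • A := by norm_cast
    rw [h1, h2]
    norm_num
  have hslope : ∀ t : ℝ, t ≠ 0 →
      slope (fun t : ℝ => exp (A + (t : ℂ) • B)) 0 t
        = ∫ s in (0:ℝ)..1, exp (s • (A + (t : ℂ) • B)) * B * exp ((1 - s) • A) := by
    intro t ht
    have key := duhamel_aux (A + (t : ℂ) • B) A
    have hsub : A + (t : ℂ) • B - A = (t : ℂ) • B := by abel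
    rw [hsub] at key
    have heq : (∫ s in (0:ℝ)..1,
          exp (s • (A + (t : ℂ) • B)) * ((t : ℂ) • B) * exp ((1 - s) • A))
        = t • ∫ s in (0:ℝ)..1, exp (s • (A + (t : ℂ) • B)) * B * exp ((1 - s) • A) := by
      rw [← intervalIntegral.integral_smul]
      apply intervalIntegral.integral_congr
      intro s _
      dsimp only
      rw [mul_smul_comm, smul_mul_assoc]
      norm_cast
    rw [heq] at key
    have hf0 : exp (A + ((0:ℝ) : ℂ) • B) = exp A := by norm_num
    rw [slope, vsub_eq_sub, sub_zero, hf0, key, smul_smul, inv_mul_cancel₀ ht, one_smul]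
  refine hasDerivAt_iff_tendsto_slope.mpr ?_
  rw [hG0]
  refine Filter.Tendsto.congr' ?_ ((hGcont.tendsto 0).mono_left nhdsWithin_le_nhds)
  filter_upwards [self_mem_nhdsWithin] with t ht
  exact (hslope t ht).symm
end

section
/- (Derivative of the partition function.) Let A and B be arbitrary n×n complex matrices. Then for every t ∈ ℝ, the map ε ↦ Tr[exp(A + εB)] is differentiable at t with derivative Tr[B exp(A + tB)]. -/
open Matrix NormedSpace
open scoped Nat

section aux
variable {n : ℕ}
attribute [local instance] Matrix.linftyOpNormedAddCommGroup Matrix.linftyOpNormedSpace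
  Matrix.linftyOpSemiNormedRing Matrix.linftyOpNormedRing Matrix.linftyOpNormedAlgebra
attribute [-instance] instTopologicalSpaceMatrix Matrix.instUniformSpace

lemma topo_eq : (instTopologicalSpaceMatrix : TopologicalSpace (Matrix (Fin n) (Fin n) ℂ)) =
    PseudoMetricSpace.toUniformSpace.toTopologicalSpace := by
  show @Pi.topologicalSpace _ _ (fun _ => _) = @Pi.topologicalSpace _ _ (fun _ => (PiLp.pseudoMetricSpaceToPi 1 (fun _ : Fin n => ℂ)).toUniformSpace.toTopologicalSpace)
  congr 1

noncomputable def trC (n : ℕ) : Matrix (Fin n) (Fin n) ℂ →L[ℂ] ℂ :=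
  LinearMap.toContinuousLinearMap (Matrix.traceLinearMap (Fin n) ℂ ℂ)

lemma pow_hasDerivAt (A B : Matrix (Fin n) (Fin n) ℂ) (k : ℕ) (z : ℂ) :
    HasDerivAt (fun z : ℂ => (A + z • B) ^ k)
      (∑ i ∈ Finset.range k, (A + z • B) ^ i * B * (A + z • B) ^ (k - 1 - i)) z := by
  induction k with
  | zero => simpa using hasDerivAt_const z (1 : Matrix (Fin n) (Fin n) ℂ)
  | succ k ih =>
    have h1 : HasDerivAt (fun z : ℂ => A + z • B) B z := by
      simpa using ((hasDerivAt_id z).smul_const B).const_add A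
    have := ih.mul h1
    simp only [Pi.mul_def, ← pow_succ] at this
    refine this.congr_deriv (Eq.symm ?_)
    rw [Finset.sum_range_succ, Finset.sum_mul]
    congr 1
    · refine Finset.sum_congr rfl fun i hi => ?_
      rw [Finset.mem_range] at hi
      rw [mul_assoc ((A + z • B) ^ i * B), ← pow_succ]
      congr 2
      omega
    · simp

lemma trace_pow_hasDerivAt (A B : Matrix (Fin n) (Fin n) ℂ) (k : ℕ) (z : ℂ) :
    HasDerivAt (fun z : ℂ => ((A + z • B) ^ k).trace)
      ((k : ℂ) * (B * (A + z • B) ^ (k - 1)).trace) z := by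
  have h := ((trC n).hasFDerivAt.comp_hasDerivAt z (pow_hasDerivAt A B k z))
  have hval : (trC n) (∑ i ∈ Finset.range k, (A + z • B) ^ i * B * (A + z • B) ^ (k - 1 - i))
      = (k : ℂ) * (B * (A + z • B) ^ (k - 1)).trace := by
    rw [map_sum]
    have : ∀ i ∈ Finset.range k,
        (trC n) ((A + z • B) ^ i * B * (A + z • B) ^ (k - 1 - i))
          = (B * (A + z • B) ^ (k - 1)).trace := by
      intro i hi
      rw [Finset.mem_range] at hi
      show ((A + z • B) ^ i * B * (A + z • B) ^ (k - 1 - i)).trace = _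
      rw [Matrix.trace_mul_comm, ← mul_assoc, ← pow_add, Matrix.trace_mul_comm]
      congr 3
      omega
    rw [Finset.sum_congr rfl this, Finset.sum_const, Finset.card_range, nsmul_eq_mul]
  rw [hval] at h
  exact h

lemma norm_mul_pow_le (Y X : Matrix (Fin n) (Fin n) ℂ) (m : ℕ) :
    ‖Y * X ^ m‖ ≤ ‖Y‖ * ‖X‖ ^ m := by
  induction m with
  | zero => simp
  | succ m ih =>
    rw [pow_succ, ← mul_assoc, pow_succ, ← mul_assoc]
    exact (norm_mul_le _ _).trans (mul_le_mul_of_nonneg_right ih (norm_nonneg _))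

lemma key (A B : Matrix (Fin n) (Fin n) ℂ) (t : ℝ) :
    HasDerivAt (fun z : ℂ => (exp (A + z • B)).trace)
      ((B * exp (A + (t : ℂ) • B)).trace) (t : ℂ) := by
  set R : ℝ := ‖(t : ℂ)‖ + 1 with hR
  set r : ℝ := ‖A‖ + R * ‖B‖ with hr
  set g : ℕ → ℂ → ℂ := fun k z => ((k ! : ℂ))⁻¹ * ((A + z • B) ^ k).trace with hg_def
  set g' : ℕ → ℂ → ℂ :=
    fun k z => ((k ! : ℂ))⁻¹ * ((k : ℂ) * (B * (A + z • B) ^ (k - 1)).trace) with hg'_def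
  set u : ℕ → ℝ := fun k => ‖trC n‖ * ‖B‖ * ((k : ℝ) * r ^ (k - 1) / k !) with hu_def
  have hRpos : (0 : ℝ) < R := by positivity
  have ht : (t : ℂ) ∈ Metric.ball (0 : ℂ) R := by
    rw [mem_ball_zero_iff]; exact lt_add_one _
  have hu : Summable u := by
    apply Summable.mul_left
    rw [← summable_nat_add_iff 1]
    have heq : ∀ k : ℕ, ((k + 1 : ℕ) : ℝ) * r ^ (k + 1 - 1) / (k + 1)! = r ^ k / k ! := by
      intro k
      rw [Nat.factorial_succ]
      push_cast
      have h1 : ((k : ℝ) + 1) ≠ 0 := by positivity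
      rw [mul_div_mul_left _ _ h1]
    simpa only [heq] using Real.summable_pow_div_factorial r
  have hg : ∀ k z, z ∈ Metric.ball (0 : ℂ) R → HasDerivAt (g k) (g' k z) z := by
    intro k z _
    exact (trace_pow_hasDerivAt A B k z).const_mul _
  have hg' : ∀ k z, z ∈ Metric.ball (0 : ℂ) R → ‖g' k z‖ ≤ u k := by
    intro k z hz
    rw [mem_ball_zero_iff] at hz
    have hM : ‖A + z • B‖ ≤ r := by
      rw [hr]
      refine (norm_add_le _ _).trans ?_
      rw [norm_smul]
      have hB : (0 : ℝ) ≤ ‖B‖ := norm_nonneg _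
      nlinarith [hz.le]
    match k with
    | 0 => simp [hg'_def, hu_def]
    | (m + 1) =>
      have htr : ‖(B * (A + z • B) ^ m).trace‖ ≤ ‖trC n‖ * (‖B‖ * r ^ m) := by
        have h1 : ‖(B * (A + z • B) ^ m).trace‖ ≤ ‖trC n‖ * ‖B * (A + z • B) ^ m‖ :=
          (trC n).le_opNorm _
        refine h1.trans (mul_le_mul_of_nonneg_left ?_ (norm_nonneg _))
        refine (norm_mul_pow_le B _ m).trans (mul_le_mul_of_nonneg_left ?_ (norm_nonneg _))
        exact pow_le_pow_left₀ (norm_nonneg _) hM m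
      simp only [hg'_def, hu_def, Nat.add_sub_cancel]
      rw [norm_mul, norm_mul, norm_inv, Complex.norm_natCast, Complex.norm_natCast]
      have hfac : (0 : ℝ) < ((m + 1)! : ℝ) := by positivity
      calc ((m + 1)! : ℝ)⁻¹ * (((m + 1 : ℕ) : ℝ) * ‖(B * (A + z • B) ^ m).trace‖)
          ≤ ((m + 1)! : ℝ)⁻¹ * (((m + 1 : ℕ) : ℝ) * (‖trC n‖ * (‖B‖ * r ^ m))) := by
            refine mul_le_mul_of_nonneg_left (mul_le_mul_of_nonneg_left htr ?_) ?_ <;> positivity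
        _ = ‖trC n‖ * ‖B‖ * (((m + 1 : ℕ) : ℝ) * r ^ m / ((m + 1)! : ℝ)) := by
            field_simp
  have hsum : ∀ z : ℂ, Summable fun k : ℕ => ((k ! : ℂ))⁻¹ • (A + z • B) ^ k :=
    fun z => NormedSpace.expSeries_summable' (𝕂 := ℂ) (A + z • B)
  have trC_apply : ∀ X : Matrix (Fin n) (Fin n) ℂ, trC n X = X.trace := fun _ => rfl
  have hg0 : Summable fun k => g k (t : ℂ) := by
    have h := (hsum (t : ℂ)).map (trC n) (trC n).continuous
    simpa only [Function.comp_def, _root_.map_smul, Matrix.trace_smul, smul_eq_mul, trC_apply, hg_def] using h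
  have hd := hasDerivAt_tsum_of_isPreconnected hu Metric.isOpen_ball
    (convex_ball (0 : ℂ) R).isPreconnected hg hg' ht hg0 ht
  have hfun : (fun z : ℂ => (exp (A + z • B)).trace) = fun z => ∑' k, g k z := by
    funext z
    rw [exp_eq_tsum (𝕂 := ℂ)]
    have h := (trC n).map_tsum (hsum z)
    simpa only [_root_.map_smul, Matrix.trace_smul, smul_eq_mul, trC_apply, hg_def] using h
  have hval : (∑' k, g' k (t : ℂ)) = (B * exp (A + (t : ℂ) • B)).trace := by
    have hgs : Summable fun k => g' k (t : ℂ) :=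
      Summable.of_norm_bounded hu fun k => hg' k _ ht
    rw [Summable.tsum_eq_zero_add hgs]
    have h0 : g' 0 (t : ℂ) = 0 := by simp [hg'_def]
    rw [h0, zero_add, exp_eq_tsum (𝕂 := ℂ)]
    set L : Matrix (Fin n) (Fin n) ℂ →L[ℂ] ℂ :=
      LinearMap.toContinuousLinearMap
        ((Matrix.traceLinearMap (Fin n) ℂ ℂ).comp (LinearMap.mulLeft ℂ B)) with hL_def
    have happ : ∀ X : Matrix (Fin n) (Fin n) ℂ, L X = (B * X).trace := fun _ => rfl
    have hL : (B * (∑' k : ℕ, ((k ! : ℂ))⁻¹ • (A + (t : ℂ) • B) ^ k)).trace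
        = ∑' k : ℕ, ((k ! : ℂ))⁻¹ * (B * (A + (t : ℂ) • B) ^ k).trace := by
      rw [← happ, L.map_tsum (hsum _)]
      refine tsum_congr fun k => ?_
      rw [_root_.map_smul, happ, smul_eq_mul]
    rw [hL]
    refine tsum_congr fun k => ?_
    simp only [hg'_def, Nat.add_sub_cancel]
    rw [Nat.factorial_succ]
    have h1 : ((k : ℂ) + 1) ≠ 0 := Nat.cast_add_one_ne_zero k
    have h2 : ((k ! : ℕ) : ℂ) ≠ 0 := Nat.cast_ne_zero.mpr k.factorial_ne_zero
    push_cast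
    field_simp
  rw [hfun, ← hval]
  exact hd

end aux

/-- **Derivative of the partition function.**  For arbitrary `n×n` complex matrices `A, B`,
the map `ε ↦ Tr[exp(A + εB)]` is differentiable at every `t ∈ ℝ` with derivative
`Tr[B exp(A + tB)]`. -/
theorem deriv_trace_exp {n : ℕ} (A B : Matrix (Fin n) (Fin n) ℂ) (t : ℝ) :
    HasDerivAt (fun ε : ℝ => (NormedSpace.exp (A + (ε : ℂ) • B)).trace)
      ((B * NormedSpace.exp (A + (t : ℂ) • B)).trace) t := by
  convert (key A B t).comp_ofReal
  all_goals exact topo_eq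
end
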